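/- arXiv:0801.4114 — 4 statements merged into one kernel-verified Lean document; each statement's English description precedes it below -/
import Mathlib

section
/- Let Q be a reduced word for v with last letter r_α, and Q' be Q minus its last letter. If w r_α < w and w ≰ v r_α, then every subword of Q whose product is w must use the last letter of Q, and removing that last letter yields a subword of Q' with product w r_α. -/
variable {B W : Type*} [DecidableEq B] [Group W] {M : CoxeterMatrix B} (cs : CoxeterSystem M W)

/-- The Bruhat order on a Coxeter group, via the subword property:
`u ≤ v` iff every reduced word for `v` contains a subword that is a reduced word for `u`. -/
def BruhatLe (u v : W) : Prop :=
  ∀ Q : List B, cs.IsReduced Q → cs.wordProd Q = v →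
    ∃ P : List B, P.Sublist Q ∧ cs.IsReduced P ∧ cs.wordProd P = u

/-- The Demazure product of a word in the simple reflections: multiply the letters in
order, omitting any letter that would decrease the length. -/
noncomputable def Dem (Q : List B) : W :=
  Q.foldl (fun w b => if cs.length w < cs.length (w * cs.simple b) then w * cs.simple b else w) 1

/-- The subword of `Q` obtained by deleting the letters at the positions in `F`
(positions are `0`-indexed); this is the complementary subword `Q ∖ F`. -/
def dmask (Q : List B) (F : Finset ℕ) : List B :=
  (Q.zipIdx.filter fun p => p.2 ∉ F).map Prod.fst

/-- The subword of `Q` consisting of the letters at the positions in `F` (in order). -/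
def smask (Q : List B) (F : Finset ℕ) : List B :=
  (Q.zipIdx.filter fun p => p.2 ∈ F).map Prod.fst

/-- `F` is a face of the subword complex `Δ(Q,w)`: `F` is a set of positions of `Q` such
that the complementary subword `Q ∖ F` contains a reduced word for `w`. -/
def IsFace (Q : List B) (w : W) (F : Finset ℕ) : Prop :=
  F ⊆ Finset.range Q.length ∧
    ∃ P : List B, P.Sublist (dmask Q F) ∧ cs.IsReduced P ∧ cs.wordProd P = w

/-- `F` is a facet (maximal face) of the subword complex `Δ(Q,w)`. -/
def IsFacet (Q : List B) (w : W) (F : Finset ℕ) : Prop :=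
  IsFace cs Q w F ∧ ∀ F' : Finset ℕ, IsFace cs Q w F' → F ⊆ F' → F' = F

namespace SubwordAux

open CoxeterSystem List

/-! ### A cocycle group used to prove the strong exchange property. -/

/-- The group `(W → ZMod 2) ⋊ W`, where `W` acts on functions by conjugating the argument. -/
structure Cg (W : Type*) where
  f : W → ZMod 2
  u : W

lemma zmod2_add_self (z : ZMod 2) : z + z = 0 := by
  rw [← two_mul, show (2 : ZMod 2) = 0 from rfl, zero_mul]

lemma Cg.ext' {a b : Cg W} (h1 : a.f = b.f) (h2 : a.u = b.u) : a = b := by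
  cases a; cases b; cases h1; cases h2; rfl

instance : Group (Cg W) where
  mul a b := ⟨a.f + fun x => b.f (a.u⁻¹ * x * a.u), a.u * b.u⟩
  one := ⟨0, 1⟩
  inv a := ⟨fun x => a.f (a.u * x * a.u⁻¹), a.u⁻¹⟩
  mul_assoc a b c := by
    refine Cg.ext' ?_ (mul_assoc _ _ _)
    funext x
    show (a.f x + b.f (a.u⁻¹ * x * a.u)) + c.f ((a.u * b.u)⁻¹ * x * (a.u * b.u))
      = a.f x + (b.f (a.u⁻¹ * x * a.u) + c.f (b.u⁻¹ * (a.u⁻¹ * x * a.u) * b.u))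
    have harg : (a.u * b.u)⁻¹ * x * (a.u * b.u) = b.u⁻¹ * (a.u⁻¹ * x * a.u) * b.u := by group
    rw [harg, add_assoc]
  one_mul a := by
    refine Cg.ext' ?_ (one_mul _)
    funext x
    show 0 + a.f ((1:W)⁻¹ * x * 1) = a.f x
    simp
  mul_one a := by
    refine Cg.ext' ?_ (mul_one _)
    funext x
    show a.f x + 0 = a.f x
    simp
  inv_mul_cancel a := by
    refine Cg.ext' ?_ (inv_mul_cancel _)
    funext x
    show a.f (a.u * x * a.u⁻¹) + a.f ((a.u⁻¹)⁻¹ * x * a.u⁻¹) = 0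
    rw [inv_inv]
    exact zmod2_add_self _

lemma Cg.mul_f (a b : Cg W) (x : W) : (a * b).f x = a.f x + b.f (a.u⁻¹ * x * a.u) := rfl
lemma Cg.mul_u (a b : Cg W) : (a * b).u = a.u * b.u := rfl
lemma Cg.one_f (x : W) : (1 : Cg W).f x = 0 := rfl
lemma Cg.one_u : (1 : Cg W).u = 1 := rfl

lemma Cg.pow_u (g : Cg W) (k : ℕ) : (g ^ k).u = g.u ^ k := by
  induction k with
  | zero => rw [pow_zero, pow_zero]; rfl
  | succ k ih => rw [pow_succ, pow_succ, Cg.mul_u, ih]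

lemma Cg.pow_f (g : Cg W) (k : ℕ) (x : W) :
    (g ^ k).f x = ∑ r ∈ Finset.range k, g.f ((g.u ^ r)⁻¹ * x * g.u ^ r) := by
  induction k with
  | zero => rw [pow_zero, Finset.sum_range_zero]; rfl
  | succ k ih =>
    rw [pow_succ, Cg.mul_f, ih, Finset.sum_range_succ, Cg.pow_u]

lemma conj_eq_iff (u y z : W) : u⁻¹ * y * u = z ↔ y = u * z * u⁻¹ := by
  constructor
  · intro h; rw [← h]; group
  · intro h; rw [h]; group

lemma sum_range_add' (F : ℕ → ZMod 2) (a b : ℕ) :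
    ∑ k ∈ Finset.range (a + b), F k
      = (∑ k ∈ Finset.range a, F k) + ∑ k ∈ Finset.range b, F (a + k) := by
  induction b with
  | zero => simp
  | succ b ih =>
    rw [show a + (b+1) = (a+b)+1 from rfl, Finset.sum_range_succ, ih,
      Finset.sum_range_succ, add_assoc]

lemma sum_pairs (F : ℕ → ZMod 2) (m : ℕ) :
    ∑ r ∈ Finset.range m, (F (2*r) + F (2*r+1)) = ∑ k ∈ Finset.range (2*m), F k := by
  induction m with
  | zero => simp
  | succ m ih =>
    rw [Finset.sum_range_succ, ih, show 2*(m+1) = (2*m+1)+1 by ring,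
      Finset.sum_range_succ, Finset.sum_range_succ, add_assoc]

section Cocycle

open scoped Classical

/-- Indicator function of `t`. -/
noncomputable def delta (t : W) : W → ZMod 2 := fun x => if x = t then 1 else 0

/-- The generators of the cocycle group. -/
noncomputable def gens (i : B) : Cg W := ⟨delta (cs.simple i), cs.simple i⟩

theorem liftable : M.IsLiftable (gens cs) := by
  intro i j
  set m := M i j with hm
  set c := cs.simple i * cs.simple j with hc
  have hcm : c ^ m = 1 := cs.simple_mul_simple_pow i j
  have hgu : (gens cs i * gens cs j).u = c := rfl
  have hsic : cs.simple i * c⁻¹ = c * cs.simple i := by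
    rw [hc, mul_inv_rev, cs.inv_simple, cs.inv_simple]
    exact (mul_assoc _ _ _).symm
  have conj1 : ∀ r : ℕ, c^r * cs.simple i * (c^r)⁻¹ = c^(2*r) * cs.simple i := by
    intro r
    induction r with
    | zero => simp
    | succ r ih =>
      calc c^(r+1) * cs.simple i * (c^(r+1))⁻¹
          = c * (c^r * cs.simple i * (c^r)⁻¹) * c⁻¹ := by
            rw [pow_succ' c r]; group
        _ = c * (c^(2*r) * cs.simple i) * c⁻¹ := by rw [ih]
        _ = c^(2*r+1) * (cs.simple i * c⁻¹) := by rw [pow_succ' c (2*r)]; group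
        _ = c^(2*r+1) * (c * cs.simple i) := by rw [hsic]
        _ = c^(2*(r+1)) * cs.simple i := by
            rw [show 2*(r+1) = (2*r+1)+1 by ring, pow_succ c (2*r+1)]
            exact (mul_assoc _ _ _).symm
  have conj2 : ∀ r : ℕ, c^r * (c * cs.simple i) * (c^r)⁻¹ = c^(2*r+1) * cs.simple i := by
    intro r
    calc c^r * (c * cs.simple i) * (c^r)⁻¹
        = c * (c^r * cs.simple i * (c^r)⁻¹) := by group
      _ = c * (c^(2*r) * cs.simple i) := by rw [conj1]
      _ = c^(2*r+1) * cs.simple i := by rw [← mul_assoc, ← pow_succ' c (2*r)]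
  apply Cg.ext'
  · funext x
    rw [Cg.pow_f, Cg.one_f]
    simp only [hgu]
    have hterm : ∀ r : ℕ, (gens cs i * gens cs j).f ((c^r)⁻¹ * x * c^r)
        = (if x = c^(2*r) * cs.simple i then (1:ZMod 2) else 0)
          + (if x = c^(2*r+1) * cs.simple i then (1:ZMod 2) else 0) := by
      intro r
      show delta (cs.simple i) ((c^r)⁻¹ * x * c^r)
          + delta (cs.simple j) ((cs.simple i)⁻¹ * ((c^r)⁻¹ * x * c^r) * cs.simple i) = _
      unfold delta
      have h1 : ((c^r)⁻¹ * x * c^r = cs.simple i) ↔ (x = c^(2*r) * cs.simple i) := by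
        rw [conj_eq_iff, conj1]
      have h2 : ((cs.simple i)⁻¹ * ((c^r)⁻¹ * x * c^r) * cs.simple i = cs.simple j)
          ↔ (x = c^(2*r+1) * cs.simple i) := by
        rw [conj_eq_iff, conj_eq_iff, cs.inv_simple,
          show cs.simple i * cs.simple j * cs.simple i = c * cs.simple i from by
            rw [hc], conj2]
      rw [if_congr h1 rfl rfl, if_congr h2 rfl rfl]
    rw [Finset.sum_congr rfl (fun r _ => hterm r)]
    rw [sum_pairs (fun k => if x = c^k * cs.simple i then (1:ZMod 2) else 0) m]
    rw [show 2*m = m + m by ring, sum_range_add']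
    have hFF : ∀ k, (if x = c^(m+k) * cs.simple i then (1:ZMod 2) else 0)
        = (if x = c^k * cs.simple i then (1:ZMod 2) else 0) := by
      intro k
      rw [pow_add, hcm, one_mul]
    rw [Finset.sum_congr rfl (fun k _ => hFF k), ← Finset.sum_add_distrib]
    rw [Finset.sum_congr rfl (fun k _ => zmod2_add_self _), Finset.sum_const, smul_zero]
  · rw [Cg.pow_u, hgu, hcm]; rfl

/-- The cocycle homomorphism. -/
noncomputable def phi : W →* Cg W := cs.lift ⟨gens cs, liftable cs⟩

lemma phi_simple (i : B) : phi cs (cs.simple i) = gens cs i :=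
  cs.lift_apply_simple (liftable cs) i

/-- Projection onto the second component. -/
def uhom : Cg W →* W where
  toFun := Cg.u
  map_one' := rfl
  map_mul' _ _ := rfl

lemma phi_u (w : W) : (phi cs w).u = w := by
  have h : (uhom.comp (phi cs)) = MonoidHom.id W := by
    apply cs.ext_simple
    intro i
    show (phi cs (cs.simple i)).u = cs.simple i
    rw [phi_simple]
    rfl
  exact DFunLike.congr_fun h w

/-- The cocycle: `nn cs w t = 1` iff `t` is a left inversion of `w`. -/
noncomputable def nn (w t : W) : ZMod 2 := (phi cs w).f t

lemma nn_one (t : W) : nn cs 1 t = 0 := by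
  unfold nn; rw [map_one]; rfl

lemma nn_mul (u v t : W) : nn cs (u * v) t = nn cs u t + nn cs v (u⁻¹ * t * u) := by
  unfold nn
  rw [map_mul, Cg.mul_f, phi_u]

lemma nn_simple (i : B) (t : W) : nn cs (cs.simple i) t = if t = cs.simple i then 1 else 0 := by
  unfold nn
  rw [phi_simple]
  rfl

lemma lis_cons (i : B) (ω : List B) :
    cs.leftInvSeq (i :: ω) = cs.simple i :: (cs.leftInvSeq ω).map (MulAut.conj (cs.simple i)) :=
  rfl

theorem mem_lis : ∀ (ω : List B) (t : W), nn cs (cs.wordProd ω) t ≠ 0 → t ∈ cs.leftInvSeq ω := by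
  intro ω
  induction ω with
  | nil =>
    intro t h
    exfalso
    apply h
    rw [cs.wordProd_nil, nn_one]
  | cons i ω ih =>
    intro t h
    rw [cs.wordProd_cons, nn_mul] at h
    by_cases hti : t = cs.simple i
    · rw [lis_cons, hti]
      exact List.mem_cons_self
    · have h1 : nn cs (cs.simple i) t = 0 := by rw [nn_simple]; simp [hti]
      rw [h1, zero_add] at h
      have h2 := ih _ h
      rw [lis_cons]
      refine List.mem_cons_of_mem _ (List.mem_map.mpr ⟨_, h2, ?_⟩)
      rw [MulAut.conj_apply]
      group

theorem nn_refl {t : W} (ht : cs.IsReflection t) : nn cs t t = 1 := by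
  obtain ⟨u, i, rfl⟩ := ht
  set T := u * cs.simple i * u⁻¹ with hT
  have h1 : nn cs (u * cs.simple i * u⁻¹) T
      = nn cs (u * cs.simple i) T + nn cs u⁻¹ ((u * cs.simple i)⁻¹ * T * (u * cs.simple i)) :=
    nn_mul cs _ _ _
  have h2 : nn cs (u * cs.simple i) T = nn cs u T + nn cs (cs.simple i) (u⁻¹ * T * u) :=
    nn_mul cs _ _ _
  have e1 : u⁻¹ * T * u = cs.simple i := by rw [hT]; group
  have e2 : (u * cs.simple i)⁻¹ * T * (u * cs.simple i) = cs.simple i := by rw [hT]; group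
  have h3 : nn cs (cs.simple i) (cs.simple i) = 1 := by rw [nn_simple, if_pos rfl]
  have h4 : (0 : ZMod 2) = nn cs u T + nn cs u⁻¹ (cs.simple i) := by
    have h5 := nn_mul cs u u⁻¹ T
    rw [mul_inv_cancel, nn_one, e1] at h5
    exact h5
  rw [h1, h2, e1, e2, h3]
  linear_combination -h4

theorem nn_imp_lt {t : W} (w : W) (h : nn cs w t = 1) :
    cs.length (t * w) < cs.length w := by
  obtain ⟨ω, hred, hw⟩ := cs.exists_reduced_word' w
  have hmem : t ∈ cs.leftInvSeq ω := by
    apply mem_lis cs ω t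
    rw [← hw, h]
    exact one_ne_zero
  have := (cs.isLeftInversion_of_mem_leftInvSeq hred hmem).2
  rwa [← hw] at this

theorem lt_iff_nn {t : W} (ht : cs.IsReflection t) (w : W) :
    cs.length (t * w) < cs.length w ↔ nn cs w t = 1 := by
  constructor
  · intro hlt
    by_contra hne
    have h0 : nn cs w t = 0 := by
      have hz : ∀ z : ZMod 2, z ≠ 1 → z = 0 := by decide
      exact hz _ hne
    have h1 : nn cs (t * w) t = 1 := by
      rw [nn_mul]
      have e : t⁻¹ * t * t = t := by group
      rw [e, nn_refl cs ht, h0, add_zero]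
    have h2 := nn_imp_lt cs (t * w) h1
    rw [← mul_assoc, ht.mul_self, one_mul] at h2
    omega
  · exact nn_imp_lt cs w

/-- The strong exchange property, left version. -/
theorem exch_left (ω : List B) {t : W} (ht : cs.IsReflection t)
    (hlt : cs.length (t * cs.wordProd ω) < cs.length (cs.wordProd ω)) :
    ∃ j < ω.length, cs.wordProd (ω.eraseIdx j) = t * cs.wordProd ω := by
  have hnn : nn cs (cs.wordProd ω) t = 1 := (lt_iff_nn cs ht _).mp hlt
  have hmem : t ∈ cs.leftInvSeq ω := mem_lis cs ω t (by rw [hnn]; exact one_ne_zero)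
  obtain ⟨j, hj, hget⟩ := List.mem_iff_getElem.mp hmem
  have hj' : j < ω.length := by rwa [cs.length_leftInvSeq] at hj
  have hgetD : (cs.leftInvSeq ω).getD j 1 = t := by
    rw [List.getD_eq_getElem _ _ hj, hget]
  exact ⟨j, hj', by rw [← cs.getD_leftInvSeq_mul_wordProd ω j, hgetD]⟩

/-- The strong exchange property, right version. -/
theorem exch_right (ω : List B) {t : W} (ht : cs.IsReflection t)
    (hlt : cs.length (cs.wordProd ω * t) < cs.length (cs.wordProd ω)) :
    ∃ ρ : List B, ρ.Sublist ω ∧ ρ.length + 1 = ω.length ∧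
      cs.wordProd ρ = cs.wordProd ω * t := by
  have h1 : cs.length (t * cs.wordProd ω.reverse) < cs.length (cs.wordProd ω.reverse) := by
    rw [cs.wordProd_reverse]
    have e : t * (cs.wordProd ω)⁻¹ = (cs.wordProd ω * t)⁻¹ := by
      rw [mul_inv_rev, ht.inv]
    rw [e, cs.length_inv, cs.length_inv]
    exact hlt
  obtain ⟨j, hj, hπ⟩ := exch_left cs ω.reverse ht h1
  refine ⟨(ω.reverse.eraseIdx j).reverse, ?_, ?_, ?_⟩
  · have hs := (List.eraseIdx_sublist ω.reverse j).reverse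
    rwa [List.reverse_reverse] at hs
  · rw [List.length_reverse, List.length_eraseIdx_add_one hj, List.length_reverse]
  · rw [cs.wordProd_reverse, hπ, cs.wordProd_reverse, mul_inv_rev, inv_inv, ht.inv]

lemma isReduced_nil : cs.IsReduced ([] : List B) := by
  show cs.length (cs.wordProd []) = _
  rw [cs.wordProd_nil, cs.length_one]
  rfl

/-- The deletion property: every word contains a reduced sublist with the same product. -/
theorem exists_reduced_sublist (ω : List B) :
    ∃ ρ : List B, ρ.Sublist ω ∧ cs.IsReduced ρ ∧ cs.wordProd ρ = cs.wordProd ω := by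
  classical
  suffices H : ∀ n (ω : List B), ω.length ≤ n →
      ∃ ρ : List B, ρ.Sublist ω ∧ cs.IsReduced ρ ∧ cs.wordProd ρ = cs.wordProd ω from
    H ω.length ω le_rfl
  intro n
  induction n with
  | zero =>
    intro ω hlen
    rw [List.length_eq_zero_iff.mp (Nat.le_zero.mp hlen)]
    exact ⟨[], List.Sublist.refl _, isReduced_nil cs, rfl⟩
  | succ n ih =>
    intro ω hlen
    by_cases hred : cs.IsReduced ω
    · exact ⟨ω, List.Sublist.refl _, hred, rfl⟩
    · have hex : ∃ k, ¬ cs.IsReduced (ω.take k) := ⟨ω.length, by rwa [List.take_length]⟩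
      set k0 := Nat.find hex with hk0
      have hspec : ¬ cs.IsReduced (ω.take k0) := Nat.find_spec hex
      have hk0pos : k0 ≠ 0 := by
        intro h0
        rw [h0, List.take_zero] at hspec
        exact hspec (isReduced_nil cs)
      have hk0le : k0 ≤ ω.length := Nat.find_le (h := hex) (by rwa [List.take_length])
      set k := k0 - 1 with hkdef
      have hkk : k + 1 = k0 := by omega
      have hredk : cs.IsReduced (ω.take k) := by
        by_contra hcon
        have := Nat.find_le (h := hex) hcon
        omega
      have hnredk1 : ¬ cs.IsReduced (ω.take (k + 1)) := by rwa [hkk]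
      have hklt : k < ω.length := by omega
      set b := ω[k] with hb
      have htake : ω.take (k + 1) = ω.take k ++ [b] := by
        rw [List.take_succ, List.getElem?_eq_getElem hklt]
        rfl
      have hπk1 : cs.wordProd (ω.take (k+1)) = cs.wordProd (ω.take k) * cs.simple b := by
        rw [htake, cs.wordProd_append, cs.wordProd_singleton]
      have hlenk : cs.length (cs.wordProd (ω.take k)) = k := by
        have h := hredk
        show cs.length (cs.wordProd (ω.take k)) = k
        rw [(h : cs.length (cs.wordProd (ω.take k)) = (ω.take k).length),
          List.length_take]
        omega
      have hlt1 : cs.length (cs.wordProd (ω.take k) * cs.simple b) < k := by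
        have hub := cs.length_wordProd_le (ω.take (k+1))
        rw [hπk1, List.length_take] at hub
        have hne : cs.length (cs.wordProd (ω.take (k+1))) ≠ (ω.take (k+1)).length :=
          fun hc => hnredk1 hc
        rw [hπk1, List.length_take] at hne
        rcases cs.length_mul_simple (cs.wordProd (ω.take k)) b with hc | hc
        · rw [hlenk] at hc
          exfalso
          apply hne
          rw [hc]
          omega
        · omega
      set t := cs.wordProd (ω.take k) * cs.simple b * (cs.wordProd (ω.take k))⁻¹ with htdef
      have ht : cs.IsReflection t := ⟨cs.wordProd (ω.take k), b, rfl⟩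
      have htx : t * cs.wordProd (ω.take k) = cs.wordProd (ω.take k) * cs.simple b := by
        rw [htdef]; group
      obtain ⟨j, hj, hπj⟩ := exch_left cs (ω.take k) ht
        (by rw [htx, hlenk]; exact hlt1)
      set ρ' := (ω.take k).eraseIdx j ++ ω.drop (k+1) with hρ'
      have hπρ' : cs.wordProd ρ' = cs.wordProd ω := by
        rw [hρ', cs.wordProd_append, hπj, htx, ← hπk1, ← cs.wordProd_append,
          List.take_append_drop]
      have hsubρ' : ρ'.Sublist ω := by
        have h1 : ((ω.take k).eraseIdx j).Sublist (ω.take k) := List.eraseIdx_sublist _ _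
        have h2 : (ω.take k).Sublist (ω.take (k+1)) := by
          rw [htake]; exact List.sublist_append_left _ _
        have h3 := (h1.trans h2).append (List.Sublist.refl (ω.drop (k+1)))
        rwa [List.take_append_drop] at h3
      have hlenρ' : ρ'.length ≤ n := by
        have hkl : (ω.take k).length = k := by rw [List.length_take]; omega
        have h1 := List.length_eraseIdx_add_one hj
        have h2 : ρ'.length = ((ω.take k).eraseIdx j).length + (ω.drop (k+1)).length := by
          rw [hρ', List.length_append]
        rw [hkl] at h1
        rw [List.length_drop] at h2
        omega
      obtain ⟨ρ, hs, hr, hπ⟩ := ih ρ' hlenρ'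
      exact ⟨ρ, hs.trans hsubρ', hr, by rw [hπ, hπρ']⟩

/-! ### The Bruhat order via chains of reflections. -/

/-- One step in the Bruhat order. -/
def bstep (u v : W) : Prop :=
  ∃ t, cs.IsReflection t ∧ v = u * t ∧ cs.length u < cs.length v

/-- The Bruhat order (chain definition). -/
def ble (u v : W) : Prop := Relation.ReflTransGen (bstep cs) u v

theorem ble_step_right {u t : W} (ht : cs.IsReflection t)
    (h : cs.length u < cs.length (u * t)) : ble cs u (u * t) :=
  Relation.ReflTransGen.single ⟨t, ht, rfl, h⟩

theorem ble_step_left {u t : W} (ht : cs.IsReflection t)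
    (h : cs.length u < cs.length (t * u)) : ble cs u (t * u) := by
  have he : t * u = u * (u⁻¹ * t * u) := by group
  have hr : cs.IsReflection (u⁻¹ * t * u) := by
    have := ht.conj u⁻¹
    rwa [inv_inv] at this
  rw [he] at h ⊢
  exact Relation.ReflTransGen.single ⟨_, hr, rfl, h⟩

/-- Subword property, easy direction: if `u ≤ v` in the chain order, then every reduced
word for `v` contains a reduced word for `u`. -/
theorem ble_subword {u v : W} (h : ble cs u v) :
    ∀ ω : List B, cs.IsReduced ω → cs.wordProd ω = v →
      ∃ ρ : List B, ρ.Sublist ω ∧ cs.IsReduced ρ ∧ cs.wordProd ρ = u := by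
  induction h with
  | refl =>
    intro ω hred hπ
    exact ⟨ω, List.Sublist.refl ω, hred, hπ⟩
  | tail h1 h2 ih =>
    rename_i bb cc
    intro ω hred hπ
    obtain ⟨t, ht, hc, hlt⟩ := h2
    have hvt : cs.wordProd ω * t = bb := by
      rw [hπ, hc, mul_assoc, ht.mul_self, mul_one]
    obtain ⟨ρ₁, hs1, _, hπ1⟩ := exch_right cs ω ht
      (by rw [hvt, hπ]; exact hlt)
    obtain ⟨ρ₂, hs2, hred2, hπ2⟩ := exists_reduced_sublist cs ρ₁
    obtain ⟨ρ₃, hs3, hred3, hπ3⟩ := ih ρ₂ hred2 (by rw [hπ2, hπ1, hvt])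
    exact ⟨ρ₃, hs3.trans (hs2.trans hs1), hred3, hπ3⟩

/-- A single-step case of the lifting property (Humphreys, Prop. 5.9). -/
theorem step59 (i : B) {w v : W} (h : bstep cs w v) :
    ble cs (cs.simple i * w) v ∨ ble cs (cs.simple i * w) (cs.simple i * v) := by
  obtain ⟨t, ht, rfl, hlt⟩ := h
  by_cases h1 : cs.simple i * w = w * t
  · left
    rw [h1]
    exact Relation.ReflTransGen.refl
  by_cases h2 : cs.length (cs.simple i * w) < cs.length w
  · left
    have hbw : ble cs (cs.simple i * w) w := by
      have hb := ble_step_left cs (cs.isReflection_simple i) (u := cs.simple i * w)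
        (by rw [cs.simple_mul_simple_cancel_left]; exact h2)
      rwa [cs.simple_mul_simple_cancel_left] at hb
    exact hbw.tail ⟨t, ht, rfl, hlt⟩
  push_neg at h2
  have hsw : cs.length (cs.simple i * w) = cs.length w + 1 := by
    rcases cs.length_simple_mul w i with hcase | hcase
    · exact hcase
    · omega
  by_cases h3 : cs.length (w * t) < cs.length (cs.simple i * (w * t))
  · right
    have hb : ble cs (cs.simple i * w) ((cs.simple i * w) * t) := by
      apply ble_step_right cs ht
      rw [mul_assoc, hsw]
      omega
    rwa [mul_assoc] at hb
  push_neg at h3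
  have hsv : cs.length (cs.simple i * (w * t)) + 1 = cs.length (w * t) := by
    rcases cs.length_simple_mul (w * t) i with hcase | hcase
    · omega
    · exact hcase
  by_cases h4 : cs.length (cs.simple i * w) < cs.length (cs.simple i * (w * t))
  · right
    exact Relation.ReflTransGen.single ⟨t, ht, (mul_assoc _ _ _).symm, h4⟩
  exfalso
  push_neg at h4
  rw [← mul_assoc] at h3 h4 hsv
  obtain ⟨ct, hct⟩ := ht.odd_length
  have hpar := cs.length_mul_mod_two w t
  have hv1 : cs.length (w * t) = cs.length w + 1 := by omega
  obtain ⟨ω₁, hω₁red, hω₁π⟩ := cs.exists_reduced_word' (cs.simple i * (w * t))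
  have hω₁len : ω₁.length = cs.length w := by
    have hh : cs.length (cs.wordProd ω₁) = ω₁.length := hω₁red
    rw [← hω₁π, ← mul_assoc] at hh
    omega
  have hπcons : cs.wordProd (i :: ω₁) = w * t := by
    rw [cs.wordProd_cons, ← hω₁π, cs.simple_mul_simple_cancel_left]
  have hredcons : cs.IsReduced (i :: ω₁) := by
    show cs.length (cs.wordProd (i :: ω₁)) = (i :: ω₁).length
    rw [hπcons, List.length_cons, hω₁len, hv1]
  have hlt2 : cs.length (cs.wordProd (i :: ω₁) * t) < cs.length (cs.wordProd (i :: ω₁)) := by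
    rw [hπcons, mul_assoc, ht.mul_self, mul_one, hv1]
    omega
  obtain ⟨ρ, hρsub, hρlen, hρπ⟩ := exch_right cs (i :: ω₁) ht hlt2
  rw [hπcons, mul_assoc, ht.mul_self, mul_one] at hρπ
  cases hρsub with
  | cons _ hsub =>
    have hρeq : ρ = ω₁ := hsub.eq_of_length (by simp at hρlen ⊢; omega)
    rw [hρeq, ← hω₁π] at hρπ
    apply h1
    have h5 := congrArg (cs.simple i * ·) hρπ
    rw [cs.simple_mul_simple_cancel_left] at h5
    exact h5.symm
  | cons_cons _ hsub =>
    rename_i l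
    rw [cs.wordProd_cons] at hρπ
    have hπl : cs.wordProd l = cs.simple i * w := by
      rw [← hρπ, cs.simple_mul_simple_cancel_left]
    have hlb := cs.length_wordProd_le l
    rw [hπl, hsw] at hlb
    simp only [List.length_cons] at hρlen
    omega

/-- The lifting property for the chain-defined Bruhat order. -/
theorem lift59 (i : B) {u v : W} (h : ble cs u v) :
    ble cs (cs.simple i * u) v ∨ ble cs (cs.simple i * u) (cs.simple i * v) := by
  induction h with
  | refl => exact Or.inr Relation.ReflTransGen.refl
  | tail h1 h2 ih =>
    rcases ih with hL | hR
    · exact Or.inl (hL.tail h2)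
    · rcases step59 cs i h2 with hA | hB
      · exact Or.inl (hR.trans hA)
      · exact Or.inr (hR.trans hB)

/-- Subword property, hard direction: a reduced sublist of a reduced word gives a
chain-order relation. -/
theorem sublist_ble : ∀ {Q P : List B}, cs.IsReduced Q → P.Sublist Q → cs.IsReduced P →
    ble cs (cs.wordProd P) (cs.wordProd Q) := by
  intro Q
  induction Q with
  | nil =>
    intro P _ hP _
    rw [List.sublist_nil.mp hP]
    exact Relation.ReflTransGen.refl
  | cons i Q₀ ih =>
    intro P hQ hP hPred
    have hQ₀ : cs.IsReduced Q₀ := by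
      have := CoxeterSystem.IsReduced.drop hQ 1
      simpa using this
    have hQlen : cs.length (cs.wordProd (i :: Q₀)) = Q₀.length + 1 := by
      rw [(hQ : cs.length (cs.wordProd (i :: Q₀)) = (i :: Q₀).length), List.length_cons]
    have hQ₀len : cs.length (cs.wordProd Q₀) = Q₀.length := hQ₀
    have hstep : ble cs (cs.wordProd Q₀) (cs.wordProd (i :: Q₀)) := by
      rw [cs.wordProd_cons]
      apply ble_step_left cs (cs.isReflection_simple i)
      rw [← cs.wordProd_cons, hQlen, hQ₀len]
      omega
    cases hP with
    | cons _ hsub => exact (ih hQ₀ hsub hPred).trans hstep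
    | cons_cons _ hsub =>
      rename_i P₀
      have hP₀red : cs.IsReduced P₀ := by
        have := CoxeterSystem.IsReduced.drop hPred 1
        simpa using this
      rcases lift59 cs i (ih hQ₀ hsub hP₀red) with hL | hR
      · rw [cs.wordProd_cons]
        exact hL.trans hstep
      · rw [cs.wordProd_cons, cs.wordProd_cons]
        exact hR

/-- The subword property: if some word for `w` is a sublist of some reduced word `Q`,
then `w` is below `π Q` in the (subword-defined) Bruhat order. -/
theorem E_to_S {Q P : List B} (hQ : cs.IsReduced Q) (hP : P.Sublist Q) :
    BruhatLe cs (cs.wordProd P) (cs.wordProd Q) := by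
  obtain ⟨ρ, hρP, hρred, hρπ⟩ := exists_reduced_sublist cs P
  have hble := sublist_ble cs hQ (hρP.trans hP) hρred
  rw [hρπ] at hble
  intro R hR hπR
  exact ble_subword cs hble R hR (by rw [hπR])

end Cocycle

end SubwordAux

/-- If `Q = Q' ++ [a]` is a reduced word for `v`, `w * sₐ < w` and `w ≰ v * sₐ`, then every
subword of `Q` with product `w` must use the last letter, and removing that last letter
yields a subword of `Q'` with product `w * sₐ`. -/
theorem subword_uses_last (Q' : List B) (a : B) (v w : W)
    (hQ : cs.IsReduced (Q' ++ [a])) (hv : cs.wordProd (Q' ++ [a]) = v)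
    (hdesc : cs.length (w * cs.simple a) < cs.length w)
    (hnle : ¬ BruhatLe cs w (v * cs.simple a)) :
    ∀ P : List B, P.Sublist (Q' ++ [a]) → cs.wordProd P = w →
      ¬ P.Sublist Q' ∧
        ∃ P' : List B, P = P' ++ [a] ∧ P'.Sublist Q' ∧ cs.wordProd P' = w * cs.simple a := by
  intro P hPsub hPw
  have hQ'red : cs.IsReduced Q' := by
    have := CoxeterSystem.IsReduced.take hQ Q'.length
    rwa [List.take_left] at this
  have hπQ : cs.wordProd (Q' ++ [a]) = cs.wordProd Q' * cs.simple a := by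
    rw [cs.wordProd_append, cs.wordProd_singleton]
  have hπQ' : cs.wordProd Q' = v * cs.simple a := by
    rw [← hv, hπQ, cs.simple_mul_simple_cancel_right]
  have hnotQ' : ¬ P.Sublist Q' := by
    intro hPQ'
    apply hnle
    have h := SubwordAux.E_to_S cs hQ'red hPQ'
    rwa [hPw, hπQ'] at h
  refine ⟨hnotQ', ?_⟩
  rcases List.sublist_append_iff.mp hPsub with ⟨X, Y, hXY, hX, hY⟩
  rcases List.sublist_singleton.mp hY with hY0 | hY1
  · exfalso
    apply hnotQ'
    rw [hXY, hY0, List.append_nil]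
    exact hX
  · refine ⟨X, by rw [hXY, hY1], hX, ?_⟩
    have h5 : cs.wordProd X * cs.simple a = w := by
      rw [← cs.wordProd_singleton, ← cs.wordProd_append, ← hY1, ← hXY, hPw]
    rw [← h5, cs.simple_mul_simple_cancel_right]
end

section
/- Let Q be a reduced word for v with last letter r_α (so v r_α < v), and let Q' be Q minus its last letter. If w r_α > w, then the last position ℓ(v) is a cone point of the subword complex Δ(Q,w): it lies in every facet, and both the deletion and the link of ℓ(v) in Δ(Q,w) equal Δ(Q', w). -/
variable {B W : Type*} [DecidableEq B] [Group W] {M : CoxeterMatrix B} (cs : CoxeterSystem M W)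

private lemma dmask_append_singleton (Q' : List B) (a : B) (F : Finset ℕ) :
    dmask (Q' ++ [a]) F = dmask Q' F ++ if Q'.length ∈ F then [] else [a] := by
  simp only [dmask, List.zipIdx_append, List.zipIdx_singleton, List.filter_append,
    List.map_append]
  congr 1
  by_cases h : Q'.length ∈ F <;> simp [h]

private lemma dmask_insert_of_le (Q : List B) (F : Finset ℕ) {n : ℕ} (h : Q.length ≤ n) :
    dmask Q (insert n F) = dmask Q F := by
  unfold dmask
  congr 1
  apply List.filter_congr
  intro p hp
  have hlt := List.snd_lt_of_mem_zipIdx hp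
  have hne : p.2 ≠ n := by omega
  simp [Finset.mem_insert, hne]

private lemma no_trailing (P₀ : List B) (w : W) (a : B)
    (hred : cs.IsReduced (P₀ ++ [a])) (hw : cs.wordProd (P₀ ++ [a]) = w)
    (hasc : cs.length w < cs.length (w * cs.simple a)) : False := by
  rw [cs.wordProd_append, cs.wordProd_singleton] at hw
  have h1 : cs.wordProd P₀ = w * cs.simple a := by
    rw [← hw, mul_assoc, cs.simple_mul_simple_self, mul_one]
  have h2 : cs.length (w * cs.simple a) ≤ P₀.length := h1 ▸ cs.length_wordProd_le P₀
  have h3 : cs.length w = P₀.length + 1 := by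
    have := hred
    unfold CoxeterSystem.IsReduced at this
    rw [cs.wordProd_append, cs.wordProd_singleton, hw] at this
    simpa using this
  omega

/-- If `Q = Q' ++ [a]` is a reduced word for `v` and `w * sₐ > w`, then the last position is a
cone point of `Δ(Q,w)`: it lies in every facet, and the deletion and the link of the last
position both equal `Δ(Q', w)`. -/
theorem cone_point_of_ascent (Q' : List B) (a : B) (v w : W)
    (hQ : cs.IsReduced (Q' ++ [a])) (hv : cs.wordProd (Q' ++ [a]) = v)
    (hasc : cs.length w < cs.length (w * cs.simple a)) :
    (∀ F : Finset ℕ, IsFacet cs (Q' ++ [a]) w F → Q'.length ∈ F) ∧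
    (∀ F : Finset ℕ, (IsFace cs (Q' ++ [a]) w F ∧ Q'.length ∉ F) ↔ IsFace cs Q' w F) ∧
    (∀ F : Finset ℕ,
      (Q'.length ∉ F ∧ IsFace cs (Q' ++ [a]) w (insert Q'.length F)) ↔ IsFace cs Q' w F) := by
  have hdel : ∀ F : Finset ℕ,
      (IsFace cs (Q' ++ [a]) w F ∧ Q'.length ∉ F) ↔ IsFace cs Q' w F := by
    intro F
    constructor
    · rintro ⟨⟨hsub, P, hPs, hPred, hPw⟩, hnF⟩
      refine ⟨?_, ?_⟩
      · intro x hx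
        have hx1 := hsub hx
        have hxn : x ≠ Q'.length := by rintro rfl; exact hnF hx
        simp only [Finset.mem_range, List.length_append, List.length_singleton] at hx1 ⊢
        omega
      · rw [dmask_append_singleton, if_neg hnF] at hPs
        rcases List.sublist_append_iff.mp hPs with ⟨P₁, P₂, rfl, h1, h2⟩
        rcases List.sublist_singleton.mp h2 with rfl | rfl
        · exact ⟨P₁, by simpa using h1, by simpa using hPred, by simpa using hPw⟩
        · exact (no_trailing cs P₁ w a hPred hPw hasc).elim
    · rintro ⟨hsub, P, hPs, hPred, hPw⟩
      have hnF : Q'.length ∉ F := fun h => by simpa using hsub h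
      refine ⟨⟨?_, P, ?_, hPred, hPw⟩, hnF⟩
      · intro x hx
        have := hsub hx
        simp only [Finset.mem_range, List.length_append, List.length_singleton] at this ⊢
        omega
      · rw [dmask_append_singleton, if_neg hnF]
        exact hPs.trans (List.sublist_append_left _ _)
  have hlink : ∀ F : Finset ℕ,
      (Q'.length ∉ F ∧ IsFace cs (Q' ++ [a]) w (insert Q'.length F)) ↔ IsFace cs Q' w F := by
    intro F
    constructor
    · rintro ⟨hnF, hsub, P, hPs, hPred, hPw⟩
      refine ⟨?_, P, ?_, hPred, hPw⟩
      · intro x hx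
        have hx1 := hsub (Finset.mem_insert_of_mem hx)
        have hxn : x ≠ Q'.length := by rintro rfl; exact hnF hx
        simp only [Finset.mem_range, List.length_append, List.length_singleton] at hx1 ⊢
        omega
      · rwa [dmask_append_singleton, if_pos (Finset.mem_insert_self _ F), List.append_nil,
          dmask_insert_of_le Q' F le_rfl] at hPs
    · rintro ⟨hsub, P, hPs, hPred, hPw⟩
      have hnF : Q'.length ∉ F := fun h => by simpa using hsub h
      refine ⟨hnF, ?_, P, ?_, hPred, hPw⟩
      · intro x hx
        rw [Finset.mem_insert] at hx
        simp only [Finset.mem_range, List.length_append, List.length_singleton]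
        rcases hx with rfl | hx
        · omega
        · have := hsub hx
          simp only [Finset.mem_range] at this
          omega
      · rw [dmask_append_singleton, if_pos (Finset.mem_insert_self _ F), List.append_nil,
          dmask_insert_of_le Q' F le_rfl]
        exact hPs
  refine ⟨?_, hdel, hlink⟩
  rintro F ⟨hface, hmax⟩
  by_contra hnF
  have hF' : IsFace cs Q' w F := (hdel F).mp ⟨hface, hnF⟩
  have hins : IsFace cs (Q' ++ [a]) w (insert Q'.length F) := ((hlink F).mpr hF').2
  have heq := hmax _ hins (Finset.subset_insert _ F)
  exact hnF (heq ▸ Finset.mem_insert_self _ F)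
end

section
/- Let Q be a reduced word for v with last letter r_α, Q' = Q minus its last letter, and suppose w r_α < w ≤ v r_α. Then the deletion of the last vertex ℓ(v) from Δ(Q,w) equals Δ(Q', w r_α) and the link of ℓ(v) in Δ(Q,w) equals Δ(Q', w). -/
variable {B W : Type*} [DecidableEq B] [Group W] {M : CoxeterMatrix B} (cs : CoxeterSystem M W)

open List CoxeterSystem

section StrongExchange

variable {B W : Type*} [Group W] {M : CoxeterMatrix B} (cs : CoxeterSystem M W)

local prefix:100 "σ" => cs.simple
local prefix:100 "π" => cs.wordProd

private lemma simple_swap_pow (i j : B) (k : ℕ) :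
    σ j * (σ i * σ j) ^ k = ((σ i * σ j)⁻¹) ^ k * σ j := by
  induction k with
  | zero => simp
  | succ k ih =>
    have h1 : σ j * (σ i * σ j) = (σ i * σ j)⁻¹ * σ j := by
      rw [mul_inv_rev, cs.inv_simple, cs.inv_simple, mul_assoc]
    calc σ j * (σ i * σ j) ^ (k + 1)
        = σ j * (σ i * σ j) * (σ i * σ j) ^ k := by rw [pow_succ']; simp only [mul_assoc]
      _ = (σ i * σ j)⁻¹ * (σ j * (σ i * σ j) ^ k) := by rw [h1, mul_assoc]
      _ = ((σ i * σ j)⁻¹) ^ (k + 1) * σ j := by rw [ih, ← mul_assoc, ← pow_succ']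

private lemma g_closed (i j : B) (n : ℕ) :
    (π (alternatingWord i j n))⁻¹ * σ (if Even n then j else i) * π (alternatingWord i j n)
      = ((σ i * σ j)⁻¹) ^ n * σ j := by
  have hπ := cs.prod_alternatingWord_eq_mul_pow i j n
  rcases Nat.even_or_odd n with he | ho
  · obtain ⟨k, rfl⟩ := he
    have he' : Even (k + k) := ⟨k, rfl⟩
    have hk : (k + k) / 2 = k := by omega
    rw [if_pos he', hk, one_mul] at hπ
    rw [if_pos he', hπ, mul_assoc, simple_swap_pow, ← mul_assoc, ← inv_pow, ← pow_add]
  · obtain ⟨k, rfl⟩ := ho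
    have ho' : ¬ Even (2 * k + 1) := by simp [parity_simps]
    have hk : (2 * k + 1) / 2 = k := by omega
    rw [if_neg ho', hk] at hπ
    rw [if_neg ho', hπ]
    have key : σ j * (σ i * (σ j * (σ i * σ j) ^ k)) = ((σ i * σ j)⁻¹) ^ (k + 1) * σ j := by
      calc σ j * (σ i * (σ j * (σ i * σ j) ^ k))
          = σ j * ((σ i * σ j) * (σ i * σ j) ^ k) := by rw [mul_assoc]
        _ = σ j * (σ i * σ j) ^ (k + 1) := by rw [← pow_succ']
        _ = ((σ i * σ j)⁻¹) ^ (k + 1) * σ j := simple_swap_pow cs i j (k + 1)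
    calc (σ j * (σ i * σ j) ^ k)⁻¹ * σ i * (σ j * (σ i * σ j) ^ k)
        = ((σ i * σ j) ^ k)⁻¹ * ((σ j)⁻¹ * (σ i * (σ j * (σ i * σ j) ^ k))) := by
          rw [mul_inv_rev]; simp only [mul_assoc]
      _ = ((σ i * σ j)⁻¹) ^ k * (((σ i * σ j)⁻¹) ^ (k + 1) * σ j) := by
          rw [cs.inv_simple, key, ← inv_pow]
      _ = ((σ i * σ j)⁻¹) ^ (2 * k + 1) * σ j := by
          rw [← mul_assoc, ← pow_add, show k + (k + 1) = 2 * k + 1 by omega]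

private lemma ris_alternatingWord (i j : B) (n : ℕ) :
    cs.rightInvSeq (alternatingWord i j n)
      = (List.range n).reverse.map (fun k => ((σ i * σ j)⁻¹) ^ k * σ j) := by
  induction n with
  | zero => simp [alternatingWord]
  | succ n ih =>
    rw [alternatingWord_succ', rightInvSeq, ih, List.range_succ, List.reverse_append]
    simp only [List.reverse_singleton, List.singleton_append, List.map_cons]
    rw [g_closed]

end StrongExchange

section StrongExchange2

attribute [local instance] Classical.propDecidable

variable {B W : Type*} [Group W] {M : CoxeterMatrix B} (cs : CoxeterSystem M W)

local prefix:100 "σ" => cs.simple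
local prefix:100 "π" => cs.wordProd

private noncomputable def tok (i : B) : Function.End (W × ZMod 2) :=
  fun p => (cs.simple i * p.1 * cs.simple i, p.2 + if p.1 = cs.simple i then 1 else 0)

private lemma prodTok (ω : List B) (t : W) (ε : ZMod 2) :
    ((ω.map (tok cs)).prod) (t, ε) =
      (π ω * t * (π ω)⁻¹, ε + (List.count t (cs.rightInvSeq ω) : ZMod 2)) := by
  induction ω generalizing t ε with
  | nil =>
    simp only [List.map_nil, List.prod_nil]
    show (t, ε) = _
    simp [rightInvSeq]
  | cons i ω ih =>
    have happ : ∀ (f g : Function.End (W × ZMod 2)) p, (f * g) p = f (g p) := fun _ _ _ => rfl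
    rw [List.map_cons, List.prod_cons, happ, ih]
    show (σ i * (π ω * t * (π ω)⁻¹) * σ i,
      (ε + (List.count t (cs.rightInvSeq ω) : ZMod 2)) +
        if π ω * t * (π ω)⁻¹ = σ i then 1 else 0) = _
    have hcond : (π ω * t * (π ω)⁻¹ = σ i) ↔ ((π ω)⁻¹ * σ i * π ω = t) := by
      constructor
      · intro h
        rw [← h]
        simp [mul_assoc]
      · intro h
        rw [← h]
        simp [mul_assoc]
    rw [wordProd_cons, rightInvSeq]
    refine Prod.ext ?_ ?_
    · simp [mul_assoc, cs.inv_simple]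
    · show _ = ε + (List.count t (((π ω)⁻¹ * σ i * π ω) :: cs.rightInvSeq ω) : ZMod 2)
      rw [List.count_cons]
      push_cast
      rw [add_assoc]
      congr 1
      by_cases hc : (π ω)⁻¹ * σ i * π ω = t
      · rw [if_pos (hcond.mpr hc)]
        simp [hc]
      · rw [if_neg (fun hh => hc (hcond.mp hh))]
        simp [hc]

private lemma pow_tok (i j : B) (m : ℕ) :
    ((CoxeterSystem.alternatingWord i j (2 * m)).map (tok cs)).prod = (tok cs i * tok cs j) ^ m := by
  induction m with
  | zero => simp [CoxeterSystem.alternatingWord]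
  | succ m ih =>
    have h2 : 2 * (m + 1) = (2 * m + 1) + 1 := by omega
    have hodd : ¬ Even (2 * m + 1) := by simp [parity_simps]
    have heven : Even (2 * m) := ⟨m, by omega⟩
    rw [h2, alternatingWord_succ', if_neg hodd, alternatingWord_succ', if_pos heven]
    rw [List.map_cons, List.map_cons, List.prod_cons, List.prod_cons, ih, pow_succ', mul_assoc]

private lemma tok_liftable : M.IsLiftable (tok cs) := by
  intro i j
  rw [← pow_tok cs i j (M i j)]
  funext p
  obtain ⟨t, ε⟩ := p
  rw [prodTok]
  show _ = (t, ε)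
  have hπ : π (CoxeterSystem.alternatingWord i j (2 * M i j)) = 1 := by
    rw [cs.prod_alternatingWord_eq_mul_pow, if_pos ⟨M i j, by omega⟩,
      show 2 * M i j / 2 = M i j by omega, one_mul, cs.simple_mul_simple_pow i j]
  have hq : ((σ i * σ j)⁻¹) ^ (M i j) = 1 := by
    rw [inv_pow, cs.simple_mul_simple_pow i j, inv_one]
  have hcnt : Even (List.count t (cs.rightInvSeq (CoxeterSystem.alternatingWord i j (2 * M i j)))) := by
    rw [ris_alternatingWord, List.map_reverse, List.count_reverse,
      show 2 * M i j = M i j + M i j by omega, List.range_add, List.map_append, List.map_map]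
    have hg : ((fun k => ((σ i * σ j)⁻¹) ^ k * σ j) ∘ fun x => M i j + x)
        = (fun k => ((σ i * σ j)⁻¹) ^ k * σ j) := by
      funext k
      simp only [Function.comp_apply, pow_add, hq, one_mul]
    rw [hg, List.count_append]
    exact ⟨_, rfl⟩
  refine Prod.ext ?_ ?_
  · show π _ * t * (π _)⁻¹ = t
    rw [hπ]; simp
  · show ε + _ = ε
    obtain ⟨c, hc⟩ := hcnt
    rw [hc]
    push_cast
    rw [CharTwo.add_self_eq_zero, add_zero]

private lemma count_ris_parity (ω ω' : List B) (h : π ω = π ω') (t : W) :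
    ((List.count t (cs.rightInvSeq ω) : ℕ) : ZMod 2)
      = ((List.count t (cs.rightInvSeq ω') : ℕ) : ZMod 2) := by
  have key : ∀ ρ : List B, (cs.lift ⟨tok cs, tok_liftable cs⟩) (π ρ) = ((ρ.map (tok cs)).prod) := by
    intro ρ
    rw [wordProd, MonoidHom.map_list_prod, List.map_map]
    congr 1
    apply List.map_congr_left
    intro i _
    exact cs.lift_apply_simple (tok_liftable cs) i
  have hpp : ((ω.map (tok cs)).prod) = ((ω'.map (tok cs)).prod) := by
    rw [← key, ← key, h]
  have h2 := congrFun hpp (t, (0 : ZMod 2))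
  rw [prodTok, prodTok] at h2
  have := congrArg Prod.snd h2
  simpa using this

private lemma simple_mem_rightInvSeq (ω : List B) (hred : cs.IsReduced ω) (a : B)
    (h : cs.length (π ω * σ a) < cs.length (π ω)) : σ a ∈ cs.rightInvSeq ω := by
  obtain ⟨τ, hτred, hτ⟩ := cs.exists_reduced_word' (π ω * σ a)
  have hπ : π (τ.concat a) = π ω := by
    rw [wordProd_concat, ← hτ, cs.simple_mul_simple_cancel_right]
  have hpar := count_ris_parity cs ω (τ.concat a) hπ.symm (σ a)
  have hτa : σ a ∉ cs.rightInvSeq τ := by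
    intro hmem
    have hinv := cs.isRightInversion_of_mem_rightInvSeq hτred hmem
    have h2 := hinv.2
    rw [← hτ, cs.simple_mul_simple_cancel_right] at h2
    omega
  have hcnt : List.count (σ a) (cs.rightInvSeq (τ.concat a)) = 1 := by
    rw [cs.rightInvSeq_concat, List.concat_eq_append, List.count_append]
    have hz : List.count (σ a) (List.map (MulAut.conj (σ a)) (cs.rightInvSeq τ)) = 0 := by
      rw [List.count_eq_zero]
      rintro hmm
      obtain ⟨x, hx, hxe⟩ := List.mem_map.mp hmm
      apply hτa
      have : x = σ a := by
        have : σ a * x * (σ a)⁻¹ = σ a := hxe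
        calc x = (σ a)⁻¹ * (σ a * x * (σ a)⁻¹) * σ a := by simp [mul_assoc]
          _ = (σ a)⁻¹ * σ a * σ a := by rw [this]
          _ = σ a := by simp
      rwa [← this]
    rw [hz]
    simp
  rw [hcnt] at hpar
  by_contra hmem
  rw [List.count_eq_zero.mpr hmem] at hpar
  simp at hpar

lemma exists_sublist_reduced (ω : List B) (hred : cs.IsReduced ω) (a : B)
    (h : cs.length (π ω * σ a) < cs.length (π ω)) :
    ∃ P : List B, P.Sublist ω ∧ cs.IsReduced P ∧ π P = π ω * σ a := by
  have hmem := simple_mem_rightInvSeq cs ω hred a h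
  obtain ⟨j, hj, hget⟩ := List.mem_iff_getElem.mp hmem
  rw [cs.length_rightInvSeq] at hj
  have hgetD : (cs.rightInvSeq ω).getD j 1 = σ a := by
    rw [List.getD_eq_getElem _ 1 (by rw [cs.length_rightInvSeq]; exact hj)]
    exact hget
  have hprod : π (ω.eraseIdx j) = π ω * σ a := by
    rw [← cs.wordProd_mul_getD_rightInvSeq, hgetD]
  refine ⟨ω.eraseIdx j, List.eraseIdx_sublist ω j, ?_, hprod⟩
  have hlen : (ω.eraseIdx j).length + 1 = ω.length := List.length_eraseIdx_add_one hj
  have hlw : cs.length (π ω * σ a) + 1 = cs.length (π ω) := by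
    rcases cs.length_mul_simple (π ω) a with h1 | h1
    · omega
    · exact h1
  have hle := cs.length_wordProd_le (ω.eraseIdx j)
  unfold CoxeterSystem.IsReduced at hred ⊢
  rw [hprod]
  omega

end StrongExchange2

section MainAux

lemma dmask_append_notmem (Q' : List B) (a : B) (F : Finset ℕ) (h : Q'.length ∉ F) :
    dmask (Q' ++ [a]) F = dmask Q' F ++ [a] := by
  unfold dmask
  rw [List.zipIdx_append, Nat.zero_add, List.zipIdx_singleton, List.filter_append, List.map_append]
  congr 1
  simp [h]

lemma dmask_insert_length (Q' : List B) (a : B) (F : Finset ℕ) :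
    dmask (Q' ++ [a]) (insert Q'.length F) = dmask Q' F := by
  unfold dmask
  rw [List.zipIdx_append, Nat.zero_add, List.zipIdx_singleton, List.filter_append]
  have h1 : List.filter (fun p => decide (p.2 ∉ insert Q'.length F)) [(a, Q'.length)] = [] := by
    simp
  have h2 : List.filter (fun p => decide (p.2 ∉ insert Q'.length F)) Q'.zipIdx
      = List.filter (fun p => decide (p.2 ∉ F)) Q'.zipIdx := by
    apply List.filter_congr
    intro p hp
    have hlt := List.snd_lt_of_mem_zipIdx hp
    have : p.2 ≠ Q'.length := by omega
    simp [Finset.mem_insert, this]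
  rw [h1, h2, List.append_nil]

end MainAux

/-- If `Q = Q' ++ [a]` is a reduced word for `v` and `w * sₐ < w ≤ v * sₐ`, then the deletion
of the last position from `Δ(Q,w)` is `Δ(Q', w * sₐ)` and its link is `Δ(Q', w)`. -/
theorem vertex_decomposition (Q' : List B) (a : B) (v w : W)
    (hQ : cs.IsReduced (Q' ++ [a])) (hv : cs.wordProd (Q' ++ [a]) = v)
    (hdesc : cs.length (w * cs.simple a) < cs.length w)
    (hle : BruhatLe cs w (v * cs.simple a)) :
    (∀ F : Finset ℕ,
      (IsFace cs (Q' ++ [a]) w F ∧ Q'.length ∉ F) ↔ IsFace cs Q' (w * cs.simple a) F) ∧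
    (∀ F : Finset ℕ,
      (Q'.length ∉ F ∧ IsFace cs (Q' ++ [a]) w (insert Q'.length F)) ↔ IsFace cs Q' w F) := by
  have hlen : (Q' ++ [a]).length = Q'.length + 1 := by simp
  have hlw : cs.length (w * cs.simple a) + 1 = cs.length w := by
    rcases cs.length_mul_simple w a with h1 | h1
    · omega
    · exact h1
  constructor
  · intro F
    constructor
    · rintro ⟨⟨hFsub, P, hPsub, hPred, hPprod⟩, hnF⟩
      have hFsub' : F ⊆ Finset.range Q'.length := by
        intro x hx
        have hx1 := hFsub hx
        rw [hlen, Finset.mem_range] at hx1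
        rw [Finset.mem_range]
        rcases Nat.lt_succ_iff_lt_or_eq.mp hx1 with h | h
        · exact h
        · exact absurd (h ▸ hx) hnF
      refine ⟨hFsub', ?_⟩
      rw [dmask_append_notmem _ _ _ hnF] at hPsub
      rcases List.sublist_append_iff.mp hPsub with ⟨P₁, P₂, rfl, h₁, h₂⟩
      rcases List.sublist_singleton.mp h₂ with rfl | rfl
      · simp only [List.append_nil] at hPred hPprod
        have hP : cs.length (cs.wordProd P₁ * cs.simple a) < cs.length (cs.wordProd P₁) := by
          rw [hPprod]; exact hdesc
        obtain ⟨P', hP'sub, hP'red, hP'prod⟩ := exists_sublist_reduced cs P₁ hPred a hP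
        exact ⟨P', hP'sub.trans h₁, hP'red, by rw [hP'prod, hPprod]⟩
      · have hP₁red : cs.IsReduced P₁ := by
          have := hPred.take P₁.length
          rwa [List.take_left] at this
        have hP₁prod : cs.wordProd P₁ = w * cs.simple a := by
          rw [← hPprod, cs.wordProd_append, cs.wordProd_singleton,
            cs.simple_mul_simple_cancel_right]
        exact ⟨P₁, h₁, hP₁red, hP₁prod⟩
    · rintro ⟨hFsub, P, hPsub, hPred, hPprod⟩
      have hnF : Q'.length ∉ F := by
        intro h
        have := hFsub h
        simp at this
      refine ⟨⟨?_, P ++ [a], ?_, ?_, ?_⟩, hnF⟩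
      · rw [hlen]
        exact hFsub.trans (Finset.range_subset_range.mpr (Nat.le_succ _))
      · rw [dmask_append_notmem _ _ _ hnF]
        exact hPsub.append (List.Sublist.refl [a])
      · unfold CoxeterSystem.IsReduced
        rw [cs.wordProd_append, cs.wordProd_singleton, hPprod,
          cs.simple_mul_simple_cancel_right]
        have : cs.length (cs.wordProd P) = P.length := hPred
        rw [hPprod] at this
        simp only [List.length_append, List.length_singleton]
        omega
      · rw [cs.wordProd_append, cs.wordProd_singleton, hPprod,
          cs.simple_mul_simple_cancel_right]
  · intro F
    constructor
    · rintro ⟨hnF, hFsub, P, hPsub, hPred, hPprod⟩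
      refine ⟨?_, P, ?_, hPred, hPprod⟩
      · intro x hx
        have hx1 := hFsub (Finset.mem_insert_of_mem hx)
        rw [hlen, Finset.mem_range] at hx1
        rw [Finset.mem_range]
        rcases Nat.lt_succ_iff_lt_or_eq.mp hx1 with h | h
        · exact h
        · exact absurd (h ▸ hx) hnF
      · rwa [dmask_insert_length] at hPsub
    · rintro ⟨hFsub, P, hPsub, hPred, hPprod⟩
      have hnF : Q'.length ∉ F := by
        intro h
        have := hFsub h
        simp at this
      refine ⟨hnF, ?_, P, ?_, hPred, hPprod⟩
      · intro x hx
        rw [hlen, Finset.mem_range]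
        rcases Finset.mem_insert.mp hx with rfl | h
        · omega
        · have := hFsub h
          rw [Finset.mem_range] at this
          omega
      · rwa [dmask_insert_length]
end

section
/- For a face F of the subword complex Δ(Q,w) (with Q a reduced word for v), the Demazure product of the complementary subword Q∖F is ≥ w in the Bruhat order. -/
variable {B W : Type*} [DecidableEq B] [Group W] {M : CoxeterMatrix B} (cs : CoxeterSystem M W)

/-! ### Auxiliary development: strong exchange, deletion, chains, subword property -/

section Aux

open Classical in
/-- Indicator function, valued in `ZMod 2`. -/
noncomputable def chi (t x : W) : ZMod 2 := if t = x then 1 else 0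

lemma chi_congr {t x t' x' : W} (h : (t = x) ↔ (t' = x')) : chi t x = chi t' x' := by
  by_cases hh : t = x
  · have := h.mp hh
    simp [chi, hh, this]
  · have : ¬ (t' = x') := fun c => hh (h.mpr c)
    simp [chi, hh, this]

lemma chi_add_self (t x : W) : chi t x + chi t x = 0 := by
  have h11 : (1 : ZMod 2) + 1 = 0 := by decide
  by_cases h : t = x <;> simp [chi, h, h11]

lemma zmod2_cases (x : ZMod 2) : x = 0 ∨ x = 1 := by revert x; decide

lemma mul_mul_eq_iff (a b t y : W) : a * t * b = a * y * b ↔ t = y := by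
  constructor
  · intro h
    have h1 : a * (t * b) = a * (y * b) := by
      rw [← mul_assoc, ← mul_assoc]; exact h
    have h2 : t * b = y * b := mul_left_cancel h1
    exact mul_right_cancel h2
  · rintro rfl; rfl

/-- The basic involution used to build the reflection representation on `W × ZMod 2`. -/
noncomputable def fmap (i : B) : W × ZMod 2 → W × ZMod 2 :=
  fun p => (cs.simple i * p.1 * cs.simple i, p.2 + chi p.1 (cs.simple i))

lemma fmap_invol (i : B) : Function.Involutive (fmap cs i) := by
  rintro ⟨t, e⟩
  simp only [fmap]
  have h1 : cs.simple i * (cs.simple i * t * cs.simple i) * cs.simple i = t := by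
    simp [mul_assoc, cs.simple_mul_simple_cancel_left, cs.simple_mul_simple_self]
  have h2 : chi (cs.simple i * t * cs.simple i) (cs.simple i) = chi t (cs.simple i) := by
    apply chi_congr
    constructor
    · intro h
      calc t = cs.simple i * (cs.simple i * t * cs.simple i) * cs.simple i := h1.symm
        _ = cs.simple i * cs.simple i * cs.simple i := by rw [h]
        _ = cs.simple i := by
            simp [mul_assoc, cs.simple_mul_simple_self]
    · rintro rfl
      simp [mul_assoc, cs.simple_mul_simple_self]
  refine Prod.ext ?_ ?_
  · exact h1
  · show e + chi t (cs.simple i) + chi (cs.simple i * t * cs.simple i) (cs.simple i) = e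
    rw [h2, add_assoc, chi_add_self, add_zero]

/-- The involution as a permutation. -/
noncomputable def fperm (i : B) : Equiv.Perm (W × ZMod 2) :=
  Function.Involutive.toPerm _ (fmap_invol cs i)

lemma fperm_apply (i : B) (p : W × ZMod 2) : fperm cs i p = fmap cs i p := rfl

lemma fperm_pow (i j : B) (n : ℕ) (t : W) (e : ZMod 2) :
    ((fperm cs i * fperm cs j) ^ n) (t, e) =
      ((cs.simple i * cs.simple j) ^ n * t * ((cs.simple i * cs.simple j) ^ n)⁻¹,
        e + ∑ l ∈ Finset.range (2 * n),
          chi t (cs.simple j * (cs.simple i * cs.simple j) ^ l)) := by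
  induction n generalizing t e with
  | zero => simp
  | succ n ih =>
    have hstep : ((fperm cs i * fperm cs j) ^ (n + 1)) (t, e)
        = ((fperm cs i * fperm cs j) ^ n) ((fperm cs i * fperm cs j) (t, e)) := by
      rw [pow_succ, Equiv.Perm.mul_apply]
    have happ : (fperm cs i * fperm cs j) (t, e)
        = (cs.simple i * (cs.simple j * t * cs.simple j) * cs.simple i,
            e + chi t (cs.simple j) + chi (cs.simple j * t * cs.simple j) (cs.simple i)) := by
      rw [Equiv.Perm.mul_apply, fperm_apply, fperm_apply]
      simp only [fmap]
    rw [hstep, happ, ih]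
    have e1 : chi (cs.simple j * t * cs.simple j) (cs.simple i)
        = chi t (cs.simple j * (cs.simple i * cs.simple j) ^ 1) := by
      apply chi_congr
      have hy : cs.simple j * (cs.simple i * cs.simple j) ^ 1 =
          cs.simple j * cs.simple i * cs.simple j := by
        rw [pow_one, mul_assoc]
      rw [hy]
      constructor
      · intro h
        calc t = cs.simple j * (cs.simple j * t * cs.simple j) * cs.simple j := by
              simp [mul_assoc, cs.simple_mul_simple_cancel_left, cs.simple_mul_simple_self]
          _ = cs.simple j * cs.simple i * cs.simple j := by rw [h]
      · rintro rfl
        simp [mul_assoc, cs.simple_mul_simple_cancel_left, cs.simple_mul_simple_self]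
    have e3 : chi t (cs.simple j) = chi t (cs.simple j * (cs.simple i * cs.simple j) ^ 0) := by
      rw [pow_zero, mul_one]
    have e2 : ∀ l : ℕ, chi (cs.simple i * (cs.simple j * t * cs.simple j) * cs.simple i)
        (cs.simple j * (cs.simple i * cs.simple j) ^ l)
        = chi t (cs.simple j * (cs.simple i * cs.simple j) ^ (l + 2)) := by
      intro l
      apply chi_congr
      have hp : (cs.simple i * cs.simple j) ^ (l + 2)
          = (cs.simple i * cs.simple j) * (cs.simple i * cs.simple j) ^ l
            * (cs.simple i * cs.simple j) := by
        rw [pow_succ, pow_succ']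
      have hy : cs.simple j * (cs.simple i * cs.simple j) ^ l
          = cs.simple i * (cs.simple j * (cs.simple j * (cs.simple i * cs.simple j) ^ (l + 2))
              * cs.simple j) * cs.simple i := by
        rw [hp]
        simp [mul_assoc, cs.simple_mul_simple_cancel_left, cs.simple_mul_simple_self]
      rw [hy]
      exact (mul_mul_eq_iff _ _ _ _).trans (mul_mul_eq_iff _ _ _ _)
    refine Prod.ext ?_ ?_
    · show (cs.simple i * cs.simple j) ^ n
          * (cs.simple i * (cs.simple j * t * cs.simple j) * cs.simple i)
          * ((cs.simple i * cs.simple j) ^ n)⁻¹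
        = (cs.simple i * cs.simple j) ^ (n + 1) * t * ((cs.simple i * cs.simple j) ^ (n + 1))⁻¹
      have hc : cs.simple i * (cs.simple j * t * cs.simple j) * cs.simple i
          = (cs.simple i * cs.simple j) * t * (cs.simple i * cs.simple j)⁻¹ := by
        rw [mul_inv_rev, cs.inv_simple, cs.inv_simple]
        simp [mul_assoc]
      rw [hc, pow_succ]
      simp [mul_assoc]
    · show (e + chi t (cs.simple j) + chi (cs.simple j * t * cs.simple j) (cs.simple i))
          + ∑ l ∈ Finset.range (2 * n),
              chi (cs.simple i * (cs.simple j * t * cs.simple j) * cs.simple i)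
                (cs.simple j * (cs.simple i * cs.simple j) ^ l)
        = e + ∑ l ∈ Finset.range (2 * (n + 1)),
            chi t (cs.simple j * (cs.simple i * cs.simple j) ^ l)
      have hrw : ∑ l ∈ Finset.range (2 * n),
          chi (cs.simple i * (cs.simple j * t * cs.simple j) * cs.simple i)
            (cs.simple j * (cs.simple i * cs.simple j) ^ l)
          = ∑ l ∈ Finset.range (2 * n),
              chi t (cs.simple j * (cs.simple i * cs.simple j) ^ (l + 2)) :=
        Finset.sum_congr rfl fun l _ => e2 l
      have h2n : 2 * (n + 1) = (2 * n + 1) + 1 := by ring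
      rw [hrw, e1, e3, h2n, Finset.sum_range_succ',
        Finset.sum_range_succ' (fun l => chi t (cs.simple j * (cs.simple i * cs.simple j) ^ (l + 1)))]
      have hidx : ∀ x : ℕ, x + 1 + 1 = x + 2 := fun x => rfl
      simp only [hidx]
      abel
  done

lemma liftable : M.IsLiftable (fperm cs) := by
  intro i j
  apply Equiv.ext
  rintro ⟨t, e⟩
  rw [fperm_pow]
  have h1 : (cs.simple i * cs.simple j) ^ M i j = 1 := cs.simple_mul_simple_pow i j
  refine Prod.ext ?_ ?_
  · show (cs.simple i * cs.simple j) ^ M i j * t * ((cs.simple i * cs.simple j) ^ M i j)⁻¹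
      = ((1 : Equiv.Perm (W × ZMod 2)) (t, e)).1
    rw [h1]
    simp
  · show e + ∑ l ∈ Finset.range (2 * M i j),
        chi t (cs.simple j * (cs.simple i * cs.simple j) ^ l)
      = ((1 : Equiv.Perm (W × ZMod 2)) (t, e)).2
    have hsum : ∑ l ∈ Finset.range (2 * M i j),
        chi t (cs.simple j * (cs.simple i * cs.simple j) ^ l) = 0 := by
      have h2m : 2 * M i j = M i j + M i j := by ring
      rw [h2m, Finset.sum_range_add]
      have : ∀ l : ℕ, chi t (cs.simple j * (cs.simple i * cs.simple j) ^ (M i j + l))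
          = chi t (cs.simple j * (cs.simple i * cs.simple j) ^ l) := by
        intro l
        congr 1
        rw [add_comm, pow_add, h1, mul_one]
      rw [Finset.sum_congr rfl fun l _ => this l]
      have hxx : ∀ x : ZMod 2, x + x = 0 := by decide
      exact hxx _
    rw [hsum, add_zero]
    simp

/-- The reflection representation of `W` on `W × ZMod 2`. -/
noncomputable def phi : W →* Equiv.Perm (W × ZMod 2) := cs.lift ⟨fperm cs, liftable cs⟩

lemma phi_simple (i : B) : phi cs (cs.simple i) = fperm cs i :=
  cs.lift_apply_simple (liftable cs) i

/-- Parity of the number of times `t` occurs in a right inversion sequence of a word for `w`. -/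
noncomputable def nu (w t : W) : ZMod 2 := (phi cs w (t, 0)).2

lemma phi_wordProd (ω : List B) (t : W) (e : ZMod 2) :
    phi cs (cs.wordProd ω) (t, e) =
      (cs.wordProd ω * t * (cs.wordProd ω)⁻¹,
        e + ((cs.rightInvSeq ω).map (chi t)).sum) := by
  induction ω with
  | nil =>
    rw [cs.wordProd_nil, map_one]
    simp
  | cons i ω ih =>
    rw [cs.wordProd_cons, map_mul, Equiv.Perm.mul_apply, ih, phi_simple, fperm_apply]
    simp only [fmap]
    have hris : cs.rightInvSeq (i :: ω)
        = ((cs.wordProd ω)⁻¹ * cs.simple i * cs.wordProd ω) :: cs.rightInvSeq ω := rfl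
    rw [hris]
    refine Prod.ext ?_ ?_
    · show cs.simple i * (cs.wordProd ω * t * (cs.wordProd ω)⁻¹) * cs.simple i
        = (cs.simple i * cs.wordProd ω) * t * (cs.simple i * cs.wordProd ω)⁻¹
      rw [mul_inv_rev, cs.inv_simple]
      simp [mul_assoc]
    · show (e + ((cs.rightInvSeq ω).map (chi t)).sum)
          + chi (cs.wordProd ω * t * (cs.wordProd ω)⁻¹) (cs.simple i)
        = e + (((((cs.wordProd ω)⁻¹ * cs.simple i * cs.wordProd ω) :: cs.rightInvSeq ω)).map
            (chi t)).sum
      rw [List.map_cons, List.sum_cons]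
      have hc : chi (cs.wordProd ω * t * (cs.wordProd ω)⁻¹) (cs.simple i)
          = chi t ((cs.wordProd ω)⁻¹ * cs.simple i * cs.wordProd ω) := by
        apply chi_congr
        constructor
        · intro h
          calc t = (cs.wordProd ω)⁻¹ * (cs.wordProd ω * t * (cs.wordProd ω)⁻¹) * cs.wordProd ω :=
                by group
            _ = (cs.wordProd ω)⁻¹ * cs.simple i * cs.wordProd ω := by rw [h]
        · rintro rfl
          group
      rw [hc]
      ring
  done

lemma phi_apply_pair (w t : W) (e : ZMod 2) :
    phi cs w (t, e) = (w * t * w⁻¹, e + nu cs w t) := by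
  obtain ⟨ω, -, rfl⟩ := cs.exists_reduced_word' w
  rw [phi_wordProd]
  unfold nu
  rw [phi_wordProd]
  simp

lemma nu_wordProd (ω : List B) (t : W) :
    nu cs (cs.wordProd ω) t = ((cs.rightInvSeq ω).map (chi t)).sum := by
  unfold nu
  rw [phi_wordProd]
  simp

lemma nu_mul (u v x : W) : nu cs (u * v) x = nu cs v x + nu cs u (v * x * v⁻¹) := by
  have h1 : phi cs (u * v) (x, 0) = phi cs u (phi cs v (x, 0)) := by
    rw [map_mul, Equiv.Perm.mul_apply]
  rw [phi_apply_pair, phi_apply_pair, phi_apply_pair] at h1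
  have := congrArg Prod.snd h1
  simpa using this

lemma nu_simple (i : B) (x : W) : nu cs (cs.simple i) x = chi x (cs.simple i) := by
  have h := nu_wordProd cs [i] x
  rw [cs.wordProd_singleton] at h
  rw [h]
  simp [CoxeterSystem.rightInvSeq]

lemma nu_conj_self (γ : List B) (i : B) :
    nu cs (cs.wordProd γ * cs.simple i * (cs.wordProd γ)⁻¹)
      (cs.wordProd γ * cs.simple i * (cs.wordProd γ)⁻¹) = 1 := by
  induction γ with
  | nil =>
    rw [cs.wordProd_nil]
    simp only [one_mul, inv_one, mul_one]
    rw [nu_simple]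
    simp [chi]
  | cons j γ ih =>
    set q := cs.wordProd γ with hq
    set t' := q * cs.simple i * q⁻¹ with ht'
    have hT : cs.wordProd (j :: γ) * cs.simple i * (cs.wordProd (j :: γ))⁻¹
        = cs.simple j * t' * cs.simple j := by
      rw [cs.wordProd_cons, mul_inv_rev, cs.inv_simple, ht']
      simp [mul_assoc, hq]
    rw [hT]
    set X := cs.simple j * t' * cs.simple j with hX
    have hmul1 : nu cs X X = nu cs (t' * cs.simple j) X
        + nu cs (cs.simple j) ((t' * cs.simple j) * X * (t' * cs.simple j)⁻¹) := by
      have : X = cs.simple j * (t' * cs.simple j) := by rw [hX, mul_assoc]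
      nth_rewrite 1 [this]
      exact nu_mul cs _ _ _
    have hmul2 : nu cs (t' * cs.simple j) X
        = nu cs (cs.simple j) X + nu cs t' (cs.simple j * X * (cs.simple j)⁻¹) := by
      exact nu_mul cs _ _ _
    have ht'inv : t'⁻¹ = t' := by
      rw [ht']
      rw [mul_inv_rev, mul_inv_rev, inv_inv, cs.inv_simple]
      simp [mul_assoc]
    have hA : cs.simple j * X * (cs.simple j)⁻¹ = t' := by
      rw [hX, cs.inv_simple]
      simp [mul_assoc, cs.simple_mul_simple_cancel_left, cs.simple_mul_simple_self]
    have ht't' : t' * t' = 1 := by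
      rw [ht']
      simp [mul_assoc, cs.simple_mul_simple_cancel_left]
    have hB : (t' * cs.simple j) * X * (t' * cs.simple j)⁻¹ = t' := by
      rw [hX, mul_inv_rev, cs.inv_simple, ht'inv]
      simp [mul_assoc, cs.simple_mul_simple_cancel_left, cs.simple_mul_simple_self, ht't']
    rw [hmul1, hmul2, hA, hB, ih, nu_simple, nu_simple]
    have hchi : chi X (cs.simple j) = chi t' (cs.simple j) := by
      apply chi_congr
      rw [hX]
      constructor
      · intro h
        calc t' = cs.simple j * (cs.simple j * t' * cs.simple j) * cs.simple j := by
              simp [mul_assoc, cs.simple_mul_simple_cancel_left, cs.simple_mul_simple_self]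
          _ = cs.simple j := by rw [h]; simp [mul_assoc, cs.simple_mul_simple_self]
      · intro h
        rw [h]
        simp [mul_assoc, cs.simple_mul_simple_self]
    rw [hchi]
    have : ∀ c : ZMod 2, c + 1 + c = 1 := by decide
    exact this _

lemma isReflection_nu_self {t : W} (ht : cs.IsReflection t) : nu cs t t = 1 := by
  obtain ⟨w, i, rfl⟩ := ht
  obtain ⟨γ, -, rfl⟩ := cs.exists_reduced_word' w
  exact nu_conj_self cs γ i

lemma mem_rightInvSeq_of_nu_eq_one {w t : W} (h1 : nu cs w t = 1) {ω : List B}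
    (hω : cs.wordProd ω = w) : t ∈ cs.rightInvSeq ω := by
  by_contra hmem
  have h0 : ((cs.rightInvSeq ω).map (chi t)).sum = 0 := by
    apply List.sum_eq_zero
    intro x hx
    obtain ⟨y, hy, rfl⟩ := List.mem_map.mp hx
    have : ¬ (t = y) := fun c => hmem (c ▸ hy)
    simp [chi, this]
  rw [← hω, nu_wordProd, h0] at h1
  exact absurd h1 (by decide)

lemma nu_eq_one_of_lt {w t : W} (ht : cs.IsReflection t)
    (h : cs.length (w * t) < cs.length w) : nu cs w t = 1 := by
  rcases zmod2_cases (nu cs w t) with h0 | h1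
  · exfalso
    have hmul : nu cs (w * t) t = 1 := by
      rw [nu_mul]
      have htt : t * t * t⁻¹ = t := by rw [ht.mul_self, one_mul, ht.inv]
      rw [htt, isReflection_nu_self cs ht, h0, add_zero]
    obtain ⟨ω, hred, hprod⟩ := cs.exists_reduced_word' (w * t)
    have hmem : t ∈ cs.rightInvSeq ω := mem_rightInvSeq_of_nu_eq_one cs hmul hprod.symm
    have hinv := cs.isRightInversion_of_mem_rightInvSeq hred hmem
    have h2 := hinv.2
    rw [← hprod] at h2
    have hwt : w * t * t = w := by rw [mul_assoc, ht.mul_self, mul_one]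
    rw [hwt] at h2
    omega
  · exact h1

/-- Strong exchange property. -/
lemma exists_eraseIdx_of_lt {w t : W} (ht : cs.IsReflection t)
    (h : cs.length (w * t) < cs.length w) (ω : List B) (hω : cs.wordProd ω = w) :
    ∃ j < ω.length, cs.wordProd (ω.eraseIdx j) = w * t := by
  have h1 : nu cs w t = 1 := nu_eq_one_of_lt cs ht h
  have hmem : t ∈ cs.rightInvSeq ω := mem_rightInvSeq_of_nu_eq_one cs h1 hω
  obtain ⟨j, hj, hjt⟩ := List.mem_iff_getElem.mp hmem
  have hj' : j < ω.length := by
    have := cs.length_rightInvSeq ω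
    omega
  refine ⟨j, hj', ?_⟩
  have hkey := cs.wordProd_mul_getD_rightInvSeq ω j
  rw [List.getD_eq_getElem _ 1 hj, hjt, hω] at hkey
  exact hkey.symm

/-- Deletion property: every word contains a reduced sublist with the same product. -/
lemma exists_reduced_sublist (ω : List B) :
    ∃ P : List B, P.Sublist ω ∧ cs.IsReduced P ∧ cs.wordProd P = cs.wordProd ω := by
  suffices H : ∀ n (ω : List B), ω.length ≤ n →
      ∃ P : List B, P.Sublist ω ∧ cs.IsReduced P ∧ cs.wordProd P = cs.wordProd ω from
    H ω.length ω le_rfl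
  intro n
  induction n with
  | zero =>
    intro ω h
    have : ω = [] := List.length_eq_zero_iff.mp (Nat.le_zero.mp h)
    subst this
    refine ⟨[], List.Sublist.refl _, ?_, rfl⟩
    show cs.length (cs.wordProd []) = ([] : List B).length
    simp
  | succ n ihn =>
    intro ω hlen
    rcases List.eq_nil_or_concat ω with rfl | ⟨R, b, rfl⟩
    · refine ⟨[], List.Sublist.refl _, ?_, rfl⟩
      show cs.length (cs.wordProd []) = ([] : List B).length
      simp
    · rw [List.concat_eq_append] at hlen ⊢
      have hR : R.length ≤ n := by
        rw [List.length_append] at hlen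
        simp at hlen
        omega
      obtain ⟨P₀, hsub₀, hred₀, hprod₀⟩ := ihn R hR
      have hlenP₀ : cs.length (cs.wordProd P₀) = P₀.length := hred₀
      rcases cs.length_mul_simple (cs.wordProd P₀) b with hup | hdown
      · refine ⟨P₀ ++ [b], hsub₀.append (List.Sublist.refl _), ?_, ?_⟩
        · show cs.length (cs.wordProd (P₀ ++ [b])) = (P₀ ++ [b]).length
          rw [cs.wordProd_append, cs.wordProd_singleton, hup, List.length_append]
          simp [hlenP₀]
        · rw [cs.wordProd_append, cs.wordProd_append, hprod₀]
      · obtain ⟨j, hj, hjprod⟩ := exists_eraseIdx_of_lt cs (cs.isReflection_simple b)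
          (by omega) P₀ rfl
        have hlen' : (P₀.eraseIdx j).length ≤ n := by
          have h1 := List.length_eraseIdx_add_one hj
          have h2 := hsub₀.length_le
          omega
        obtain ⟨P₁, hsub₁, hred₁, hprod₁⟩ := ihn (P₀.eraseIdx j) hlen'
        refine ⟨P₁, ?_, hred₁, ?_⟩
        · exact ((hsub₁.trans (List.eraseIdx_sublist _ _)).trans hsub₀).trans
            (List.sublist_append_left R [b])
        · rw [hprod₁, hjprod, cs.wordProd_append, cs.wordProd_singleton, hprod₀]

/-- One step in a Bruhat chain. -/
def ChainStep (a b : W) : Prop :=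
  ∃ t, cs.IsReflection t ∧ b = a * t ∧ cs.length a < cs.length b

/-- The main mutual induction: subword property (to chains), the lifting property `Z`,
and the lifting property `L`. -/
lemma key : ∀ n : ℕ, ∀ v : W, cs.length v ≤ n →
    ((∀ Q P : List B, cs.IsReduced Q → cs.wordProd Q = v → P.Sublist Q → cs.IsReduced P →
        Relation.ReflTransGen (ChainStep cs) (cs.wordProd P) v) ∧
      (∀ (u : W) (i : B), Relation.ReflTransGen (ChainStep cs) u v →
        cs.length (v * cs.simple i) < cs.length v →
        (cs.length (u * cs.simple i) < cs.length u →
          Relation.ReflTransGen (ChainStep cs) (u * cs.simple i) (v * cs.simple i)) ∧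
        (cs.length u < cs.length (u * cs.simple i) →
          Relation.ReflTransGen (ChainStep cs) u (v * cs.simple i))) ∧
      (∀ (u : W) (i : B), Relation.ReflTransGen (ChainStep cs) u v →
        cs.length u < cs.length (u * cs.simple i) →
        cs.length v < cs.length (v * cs.simple i) →
        Relation.ReflTransGen (ChainStep cs) (u * cs.simple i) (v * cs.simple i))) := by
  intro n
  induction n with
  | zero =>
    intro v hv
    have hv1 : v = 1 := cs.length_eq_zero_iff.mp (Nat.le_zero.mp hv)
    subst hv1
    refine ⟨?_, ?_, ?_⟩
    · intro Q P hQred hQv hsub hPred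
      have hQlen : Q.length = 0 := by
        have h1 : cs.length (cs.wordProd Q) = Q.length := hQred
        rw [hQv] at h1
        simp at h1
        omega
      have hQ : Q = [] := List.length_eq_zero_iff.mp hQlen
      subst hQ
      have hP : P = [] := List.sublist_nil.mp hsub
      subst hP
      rw [cs.wordProd_nil]
    · intro u i hc hd
      simp at hd
    · intro u i hc hu hv'
      have hu1 : u = 1 := by
        rcases hc.cases_tail with h | ⟨c, -, -, -, -, hlt⟩
        · exact h.symm
        · simp at hlt
      subst hu1
      exact Relation.ReflTransGen.refl
  | succ n ih =>
    intro v hvn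
    constructor
    · -- Subword property
      intro Q P hQred hQv hsub hPred
      rcases List.eq_nil_or_concat Q with rfl | ⟨Q₁, b, rfl⟩
      · have hP : P = [] := List.sublist_nil.mp hsub
        subst hP
        rw [cs.wordProd_nil] at hQv ⊢
        rw [← hQv]
      · rw [List.concat_eq_append] at hQv hsub hQred
        have hQ₁red : cs.IsReduced Q₁ := by
          have := CoxeterSystem.IsReduced.take hQred Q₁.length
          rwa [List.take_left] at this
        have hlenv : cs.length v = Q₁.length + 1 := by
          have h1 : cs.length (cs.wordProd (Q₁ ++ [b])) = (Q₁ ++ [b]).length := hQred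
          rw [hQv] at h1
          rw [h1, List.length_append]
          simp
        have hv₁ : cs.length (cs.wordProd Q₁) = Q₁.length := hQ₁red
        have hvsplit : v = cs.wordProd Q₁ * cs.simple b := by
          rw [← hQv, cs.wordProd_append, cs.wordProd_singleton]
        have hrank : cs.length (cs.wordProd Q₁) ≤ n := by omega
        rcases List.sublist_append_iff.mp hsub with ⟨P₁, P₂, rfl, hsubQ₁, hsub2⟩
        rcases List.sublist_singleton.mp hsub2 with rfl | rfl
        · rw [List.append_nil] at hPred ⊢
          have h1 := (ih _ hrank).1 Q₁ P₁ hQ₁red rfl hsubQ₁ hPred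
          exact h1.tail ⟨cs.simple b, cs.isReflection_simple b, hvsplit, by omega⟩
        · have hP₁red : cs.IsReduced P₁ := by
            have := CoxeterSystem.IsReduced.take hPred P₁.length
            rwa [List.take_left] at this
          have h1 := (ih _ hrank).1 Q₁ P₁ hQ₁red rfl hsubQ₁ hP₁red
          have hPprod : cs.wordProd (P₁ ++ [b]) = cs.wordProd P₁ * cs.simple b := by
            rw [cs.wordProd_append, cs.wordProd_singleton]
          have hPlen : cs.length (cs.wordProd P₁ * cs.simple b) = P₁.length + 1 := by
            have h2 : cs.length (cs.wordProd (P₁ ++ [b])) = (P₁ ++ [b]).length := hPred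
            rw [hPprod] at h2
            rw [h2, List.length_append]
            simp
          have hlP₁ : cs.length (cs.wordProd P₁) = P₁.length := hP₁red
          have h2 := (ih _ hrank).2.2 (cs.wordProd P₁) b h1 (by omega)
            (by rw [← hvsplit]; omega)
          rw [hPprod, hvsplit]
          exact h2
    constructor
    · -- Z property
      intro u i hc hd
      rcases hc.cases_tail with heq | ⟨w, hcw, t, ht, hveq, hlt⟩
      · subst heq
        exact ⟨fun _ => Relation.ReflTransGen.refl, fun h => absurd hd (by omega)⟩
      · have hrankw : cs.length w ≤ n := by omega
        have hvs : cs.length (v * cs.simple i) + 1 = cs.length v := by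
          rcases cs.length_mul_simple v i with h' | h'
          · omega
          · exact h'
        rcases cs.length_mul_simple w i with hws | hws
        · -- ℓ(w sᵢ) = ℓ w + 1 : construct the claim ChainLe w (v * sᵢ)
          have hvt : v * t = w := by rw [hveq, mul_assoc, ht.mul_self, mul_one]
          have hltvt : cs.length (v * t) < cs.length v := by rw [hvt]; exact hlt
          obtain ⟨Ω₁, hΩ₁red, hΩ₁eq⟩ := cs.exists_reduced_word' (v * cs.simple i)
          have hΩprod : cs.wordProd (Ω₁ ++ [i]) = v := by
            rw [cs.wordProd_append, cs.wordProd_singleton, ← hΩ₁eq,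
              cs.simple_mul_simple_cancel_right]
          obtain ⟨j, hj, hjerase⟩ := exists_eraseIdx_of_lt cs ht hltvt (Ω₁ ++ [i]) hΩprod
          rw [hvt] at hjerase
          have hΩ₁len : cs.length (v * cs.simple i) = Ω₁.length := by
            have h' : cs.length (cs.wordProd Ω₁) = Ω₁.length := hΩ₁red
            rw [← hΩ₁eq] at h'
            exact h' 
          have hclaim : Relation.ReflTransGen (ChainStep cs) w (v * cs.simple i) := by
            rcases lt_or_ge j Ω₁.length with hjlt | hjge
            · rw [List.eraseIdx_append_of_lt_length hjlt] at hjerase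
              rw [cs.wordProd_append, cs.wordProd_singleton] at hjerase
              have hE : cs.wordProd (Ω₁.eraseIdx j) = w * cs.simple i := by
                rw [← hjerase, cs.simple_mul_simple_cancel_right]
              obtain ⟨P₁, hP₁sub, hP₁red, hP₁prod⟩ := exists_reduced_sublist cs (Ω₁.eraseIdx j)
              rw [hE] at hP₁prod
              have hrankvs : cs.length (v * cs.simple i) ≤ n := by omega
              have hSUB := (ih _ hrankvs).1 Ω₁ P₁ hΩ₁red hΩ₁eq.symm
                (hP₁sub.trans (List.eraseIdx_sublist _ _)) hP₁red
              rw [hP₁prod] at hSUB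
              exact Relation.ReflTransGen.head
                ⟨cs.simple i, cs.isReflection_simple i, rfl, by omega⟩ hSUB
            · have hje : j = Ω₁.length := by
                rw [List.length_append] at hj
                simp at hj
                omega
              rw [List.eraseIdx_append_of_length_le (le_of_eq hje.symm)] at hjerase
              have : [i].eraseIdx (j - Ω₁.length) = [] := by
                rw [hje]
                simp
              rw [this, List.append_nil] at hjerase
              rw [← hΩ₁eq] at hjerase
              rw [← hjerase]
          refine ⟨fun h => ?_, fun _ => hcw.trans hclaim⟩
          exact Relation.ReflTransGen.head
            ⟨cs.simple i, cs.isReflection_simple i,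
              (cs.simple_mul_simple_cancel_right i (w := u)).symm, h⟩
            (hcw.trans hclaim)
        · -- ℓ(w sᵢ) + 1 = ℓ w
          obtain ⟨z1, z2⟩ := (ih w hrankw).2.1 u i hcw (by omega)
          have hstep : ChainStep cs (w * cs.simple i) (v * cs.simple i) := by
            refine ⟨cs.simple i * t * cs.simple i, ?_, ?_, by omega⟩
            · have := ht.conj (cs.simple i)
              rwa [cs.inv_simple] at this
            · rw [hveq]
              simp [mul_assoc, cs.simple_mul_simple_cancel_left]
          exact ⟨fun h => (z1 h).tail hstep, fun h => (z2 h).tail hstep⟩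
    · -- L property
      intro u i hc hu hv'
      rcases hc.cases_tail with heq | ⟨w, hcw, t, ht, hveq, hlt⟩
      · subst heq
        exact Relation.ReflTransGen.refl
      · have hrankw : cs.length w ≤ n := by omega
        rcases cs.length_mul_simple w i with hws | hws
        · have h1 := (ih w hrankw).2.2 u i hcw hu (by omega)
          refine h1.tail ⟨cs.simple i * t * cs.simple i, ?_, ?_, by omega⟩
          · have := ht.conj (cs.simple i)
            rwa [cs.inv_simple] at this
          · rw [hveq]
            simp [mul_assoc, cs.simple_mul_simple_cancel_left]
        · have hz := ((ih w hrankw).2.1 u i hcw (by omega)).2 hu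
          have hrankws : cs.length (w * cs.simple i) ≤ n := by omega
          have hL2 := (ih (w * cs.simple i) hrankws).2.2 u i hz hu
            (by rw [cs.simple_mul_simple_cancel_right]; omega)
          rw [cs.simple_mul_simple_cancel_right] at hL2
          exact (hL2.tail ⟨t, ht, hveq, hlt⟩).tail
            ⟨cs.simple i, cs.isReflection_simple i, rfl, hv'⟩

lemma chainLe_sub {v : W} (Q P : List B) (hQred : cs.IsReduced Q) (hQv : cs.wordProd Q = v)
    (hsub : P.Sublist Q) (hPred : cs.IsReduced P) :
    Relation.ReflTransGen (ChainStep cs) (cs.wordProd P) v :=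
  (key cs (cs.length v) v le_rfl).1 Q P hQred hQv hsub hPred

lemma chainLe_Z {u v : W} (i : B) (h : Relation.ReflTransGen (ChainStep cs) u v)
    (hd : cs.length (v * cs.simple i) < cs.length v)
    (hu : cs.length u < cs.length (u * cs.simple i)) :
    Relation.ReflTransGen (ChainStep cs) u (v * cs.simple i) :=
  ((key cs (cs.length v) v le_rfl).2.1 u i h hd).2 hu

lemma chainLe_L {u v : W} (i : B) (h : Relation.ReflTransGen (ChainStep cs) u v)
    (hu : cs.length u < cs.length (u * cs.simple i))
    (hv : cs.length v < cs.length (v * cs.simple i)) :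
    Relation.ReflTransGen (ChainStep cs) (u * cs.simple i) (v * cs.simple i) :=
  (key cs (cs.length v) v le_rfl).2.2 u i h hu hv

/-- Chains imply the (universal) subword property. -/
lemma chainLe_bruhatLe {u v : W} (h : Relation.ReflTransGen (ChainStep cs) u v) :
    BruhatLe cs u v := by
  induction h with
  | refl => exact fun Q' hr hp => ⟨Q', List.Sublist.refl _, hr, hp⟩
  | @tail w c hc hstep ih =>
    obtain ⟨t, ht, rfl, hlt⟩ := hstep
    intro Q' hr hp
    have hvt : (w * t) * t = w := by rw [mul_assoc, ht.mul_self, mul_one]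
    obtain ⟨j, hj, hjprod⟩ := exists_eraseIdx_of_lt cs ht (by rw [hvt]; exact hlt) Q' hp
    rw [hvt] at hjprod
    obtain ⟨P₁, hsub₁, hred₁, hprod₁⟩ := exists_reduced_sublist cs (Q'.eraseIdx j)
    rw [hjprod] at hprod₁
    obtain ⟨P₂, hsub₂, hred₂, hprod₂⟩ := ih P₁ hred₁ hprod₁
    exact ⟨P₂, (hsub₂.trans hsub₁).trans (List.eraseIdx_sublist _ _), hred₂, hprod₂⟩

lemma dem_append_singleton (R : List B) (b : B) :
    Dem cs (R ++ [b]) =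
      if cs.length (Dem cs R) < cs.length (Dem cs R * cs.simple b) then Dem cs R * cs.simple b
      else Dem cs R := by
  simp only [Dem, List.foldl_concat]
  rfl

/-- Any reduced sublist of `R` is below the Demazure product of `R` in the chain order. -/
lemma chainLe_dem (R : List B) : ∀ P : List B, P.Sublist R → cs.IsReduced P →
    Relation.ReflTransGen (ChainStep cs) (cs.wordProd P) (Dem cs R) := by
  induction R using List.reverseRecOn with
  | nil =>
    intro P hsub hred
    have hP : P = [] := List.sublist_nil.mp hsub
    subst hP
    have hD : Dem cs [] = (1 : W) := rfl
    rw [hD, cs.wordProd_nil]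
  | append_singleton R b ih =>
    intro P hsub hred
    rw [dem_append_singleton]
    rcases cs.length_mul_simple (Dem cs R) b with hup | hdown
    · rw [if_pos (by omega)]
      rcases List.sublist_append_iff.mp hsub with ⟨P₁, P₂, rfl, hs₁, hs₂⟩
      rcases List.sublist_singleton.mp hs₂ with rfl | rfl
      · rw [List.append_nil] at hred ⊢
        exact (ih P₁ hs₁ hred).tail ⟨cs.simple b, cs.isReflection_simple b, rfl, by omega⟩
      · have hP₁red : cs.IsReduced P₁ := by
          have := CoxeterSystem.IsReduced.take hred P₁.length
          rwa [List.take_left] at this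
        have h1 := ih P₁ hs₁ hP₁red
        have hPprod : cs.wordProd (P₁ ++ [b]) = cs.wordProd P₁ * cs.simple b := by
          rw [cs.wordProd_append, cs.wordProd_singleton]
        have hPlen : cs.length (cs.wordProd P₁ * cs.simple b) = P₁.length + 1 := by
          have h2 : cs.length (cs.wordProd (P₁ ++ [b])) = (P₁ ++ [b]).length := hred
          rw [hPprod] at h2
          rw [h2, List.length_append]
          simp
        have hlP₁ : cs.length (cs.wordProd P₁) = P₁.length := hP₁red
        rw [hPprod]
        exact chainLe_L cs b h1 (by omega) (by omega)
    · rw [if_neg (by omega)]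
      rcases List.sublist_append_iff.mp hsub with ⟨P₁, P₂, rfl, hs₁, hs₂⟩
      rcases List.sublist_singleton.mp hs₂ with rfl | rfl
      · rw [List.append_nil] at hred ⊢
        exact ih P₁ hs₁ hred
      · have hP₁red : cs.IsReduced P₁ := by
          have := CoxeterSystem.IsReduced.take hred P₁.length
          rwa [List.take_left] at this
        have h1 := ih P₁ hs₁ hP₁red
        have hPprod : cs.wordProd (P₁ ++ [b]) = cs.wordProd P₁ * cs.simple b := by
          rw [cs.wordProd_append, cs.wordProd_singleton]
        have hPlen : cs.length (cs.wordProd P₁ * cs.simple b) = P₁.length + 1 := by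
          have h2 : cs.length (cs.wordProd (P₁ ++ [b])) = (P₁ ++ [b]).length := hred
          rw [hPprod] at h2
          rw [h2, List.length_append]
          simp
        have hlP₁ : cs.length (cs.wordProd P₁) = P₁.length := hP₁red
        have hz := chainLe_Z cs b h1 (by omega) (by omega)
        have hL := chainLe_L cs b hz (by omega)
          (by rw [cs.simple_mul_simple_cancel_right]; omega)
        rw [cs.simple_mul_simple_cancel_right] at hL
        rw [hPprod]
        exact hL

end Aux

/-- For any face `F` of the subword complex `Δ(Q,w)`, the Demazure product of the
complementary subword `Q ∖ F` is `≥ w` in Bruhat order. -/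
theorem dem_of_face_ge (Q : List B) (v w : W)
    (hred : cs.IsReduced Q) (hv : cs.wordProd Q = v)
    (F : Finset ℕ) (hF : IsFace cs Q w F) :
    BruhatLe cs w (Dem cs (dmask Q F)) := by
  obtain ⟨-, P, hsub, hredP, hprodP⟩ := hF
  have h1 := chainLe_dem cs (dmask Q F) P hsub hredP
  rw [hprodP] at h1
  exact chainLe_bruhatLe cs h1
end
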